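/- arXiv:2107.10142 — 11 statements merged into one kernel-verified Lean document; each statement's English description precedes it below -/
import Mathlib

section
/- For every real α > 1, every positive integer q, and all positive real numbers p_1, …, p_q satisfying ∑_{j=1}^q p_j^{1−α} = q, one has ∑_{j=1}^q (q−j+1)·p_j ≥ (∑_{j=1}^q (q−j+1)^{(α−1)/α})^{α/(α−1)} · q^{1/(1−α)}. -/
open Finset

/-- Lower bound of the auxiliary convex program in the NP-hardness proof of Theorem 1:
for `α > 1` and positive `p₁, …, p_q` with `∑ pⱼ^(1-α) = q`, the objective
`∑ (q-j+1)·pⱼ` is at least `(∑ (q-j+1)^((α-1)/α))^(α/(α-1)) · q^(1/(1-α))`. -/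
theorem convex_program_lower_bound_rigid
    (α : ℝ) (hα : 1 < α) (q : ℕ) (hq : 0 < q) (p : ℕ → ℝ)
    (hp : ∀ j ∈ Icc 1 q, 0 < p j)
    (henergy : ∑ j ∈ Icc 1 q, p j ^ (1 - α) = (q : ℝ)) :
    ∑ j ∈ Icc 1 q, ((q : ℝ) - j + 1) * p j ≥
      (∑ j ∈ Icc 1 q, ((q : ℝ) - j + 1) ^ ((α - 1) / α)) ^ (α / (α - 1)) *
        (q : ℝ) ^ (1 / (1 - α)) := by
  have hα0 : (0:ℝ) < α := lt_trans one_pos hα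
  have hα1 : (0:ℝ) < α - 1 := sub_pos.2 hα
  have hαne : α ≠ 0 := ne_of_gt hα0
  have hα1ne : α - 1 ≠ 0 := ne_of_gt hα1
  set w : ℕ → ℝ := fun j => (q : ℝ) - j + 1 with hw
  have hwpos : ∀ j ∈ Icc 1 q, 0 < w j := by
    intro j hj
    rw [mem_Icc] at hj
    have : (j : ℝ) ≤ q := Nat.cast_le.2 hj.2
    simp only [hw]; linarith
  have hpq : Real.HolderConjugate (α / (α - 1)) α := by
    exact ((Real.holderConjugate_iff_eq_conjExponent hα).2 rfl).symm
  set A : ℝ := ∑ j ∈ Icc 1 q, w j * p j with hA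
  have hApos : 0 < A :=
    Finset.sum_pos (fun j hj => mul_pos (hwpos j hj) (hp j hj)) (Finset.nonempty_Icc.2 hq)
  have hqpos : (0:ℝ) < q := Nat.cast_pos.2 hq
  set S : ℝ := ∑ j ∈ Icc 1 q, w j ^ ((α - 1) / α) with hS
  have key : S ≤ A ^ ((α - 1) / α) * (q : ℝ) ^ (1 / α) := by
    have holder := Real.inner_le_Lp_mul_Lq (Icc 1 q)
      (fun j => (w j * p j) ^ ((α - 1) / α)) (fun j => p j ^ ((1 - α) / α)) hpq
    have e1 : S = ∑ j ∈ Icc 1 q, (w j * p j) ^ ((α - 1) / α) * p j ^ ((1 - α) / α) := by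
      apply Finset.sum_congr rfl
      intro j hj
      rw [Real.mul_rpow (le_of_lt (hwpos j hj)) (le_of_lt (hp j hj)), mul_assoc,
        ← Real.rpow_add (hp j hj)]
      rw [show (α - 1) / α + (1 - α) / α = 0 by ring, Real.rpow_zero, mul_one]
    have e2 : ∑ j ∈ Icc 1 q, |(w j * p j) ^ ((α - 1) / α)| ^ (α / (α - 1)) = A := by
      rw [hA]; apply Finset.sum_congr rfl
      intro j hj
      have hwp : (0:ℝ) ≤ w j * p j := le_of_lt (mul_pos (hwpos j hj) (hp j hj))
      rw [abs_of_nonneg (Real.rpow_nonneg hwp _), ← Real.rpow_mul hwp,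
        show (α - 1) / α * (α / (α - 1)) = 1 by field_simp, Real.rpow_one]
    have e3 : ∑ j ∈ Icc 1 q, |p j ^ ((1 - α) / α)| ^ α = (q : ℝ) := by
      rw [← henergy]; apply Finset.sum_congr rfl
      intro j hj
      rw [abs_of_nonneg (Real.rpow_nonneg (le_of_lt (hp j hj)) _),
        ← Real.rpow_mul (le_of_lt (hp j hj)),
        show (1 - α) / α * α = 1 - α by field_simp]
    rw [e1]
    calc ∑ j ∈ Icc 1 q, (w j * p j) ^ ((α - 1) / α) * p j ^ ((1 - α) / α)
        ≤ (∑ j ∈ Icc 1 q, |(w j * p j) ^ ((α - 1) / α)| ^ (α / (α - 1))) ^ (1 / (α / (α - 1)))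
          * (∑ j ∈ Icc 1 q, |p j ^ ((1 - α) / α)| ^ α) ^ (1 / α) := holder
      _ = A ^ ((α - 1) / α) * (q : ℝ) ^ (1 / α) := by
          rw [e2, e3, one_div_div]
  have hSnonneg : 0 ≤ S :=
    Finset.sum_nonneg fun j hj => Real.rpow_nonneg (le_of_lt (hwpos j hj)) _
  have key2 : S ^ (α / (α - 1)) ≤ A * (q : ℝ) ^ (1 / (α - 1)) := by
    have hrhs : (0:ℝ) ≤ A ^ ((α - 1) / α) * (q : ℝ) ^ (1 / α) :=
      mul_nonneg (Real.rpow_nonneg hApos.le _) (Real.rpow_nonneg hqpos.le _)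
    have := Real.rpow_le_rpow hSnonneg key (le_of_lt (div_pos hα0 hα1))
    calc S ^ (α / (α - 1)) ≤ (A ^ ((α - 1) / α) * (q : ℝ) ^ (1 / α)) ^ (α / (α - 1)) := this
      _ = A * (q : ℝ) ^ (1 / (α - 1)) := by
          rw [Real.mul_rpow (Real.rpow_nonneg hApos.le _) (Real.rpow_nonneg hqpos.le _),
            ← Real.rpow_mul hApos.le, ← Real.rpow_mul hqpos.le,
            show (α - 1) / α * (α / (α - 1)) = 1 by field_simp,
            show 1 / α * (α / (α - 1)) = 1 / (α - 1) by field_simp, Real.rpow_one]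
  -- conclude
  rw [ge_iff_le]
  have hqpow : (0:ℝ) < (q : ℝ) ^ (1 / (1 - α)) := Real.rpow_pos_of_pos hqpos _
  have hqmul : (q : ℝ) ^ (1 / (α - 1)) * (q : ℝ) ^ (1 / (1 - α)) = 1 := by
    rw [← Real.rpow_add hqpos, show 1 / (α - 1) + 1 / (1 - α) = 0 by
      have h1 : (1:ℝ) - α ≠ 0 := by intro h; apply hα1ne; linarith
      field_simp; ring, Real.rpow_zero]
  calc S ^ (α / (α - 1)) * (q : ℝ) ^ (1 / (1 - α))
      ≤ A * (q : ℝ) ^ (1 / (α - 1)) * (q : ℝ) ^ (1 / (1 - α)) :=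
        mul_le_mul_of_nonneg_right key2 hqpow.le
    _ = A := by rw [mul_assoc, hqmul, mul_one]
end

section
/- Let α > 1 be real, q a positive integer, S = ∑_{k=1}^q (q−k+1)^{(α−1)/α}, and define p*_j = S^{1/(α−1)} / ( q^{1/(α−1)} · (q−j+1)^{1/α} ) for j = 1, …, q. Then ∑_{j=1}^q (p*_j)^{1−α} = q and ∑_{j=1}^q (q−j+1)·p*_j = S^{α/(α−1)} · q^{1/(1−α)}; that is, the point p* is feasible for the convex program and attains the value (∑_{j=1}^q (q−j+1)^{(α−1)/α})^{α/(α−1)} · q^{1/(1−α)}. -/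
open Finset

/-- The explicit durations `p*_j = S^(1/(α-1)) / (q^(1/(α-1)) · (q-j+1)^(1/α))`, where
`S = ∑ (q-k+1)^((α-1)/α)`, are feasible for the convex program (their energy is exactly `q`)
and attain the objective value `S^(α/(α-1)) · q^(1/(1-α))`. -/
theorem convex_program_optimal_point_rigid
    (α : ℝ) (hα : 1 < α) (q : ℕ) (hq : 0 < q)
    (S : ℝ) (hS : S = ∑ k ∈ Icc 1 q, ((q : ℝ) - k + 1) ^ ((α - 1) / α))
    (p : ℕ → ℝ)
    (hp : ∀ j ∈ Icc 1 q,
      p j = S ^ (1 / (α - 1)) / ((q : ℝ) ^ (1 / (α - 1)) * ((q : ℝ) - j + 1) ^ (1 / α))) :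
    (∑ j ∈ Icc 1 q, p j ^ (1 - α) = (q : ℝ)) ∧
      ∑ j ∈ Icc 1 q, ((q : ℝ) - j + 1) * p j = S ^ (α / (α - 1)) * (q : ℝ) ^ (1 / (1 - α)) := by
  have hα0 : α ≠ 0 := by linarith
  have hα1 : α - 1 ≠ 0 := by linarith
  have hqpos : (0 : ℝ) < q := by exact_mod_cast hq
  have hterm : ∀ j ∈ Icc 1 q, (0 : ℝ) < (q : ℝ) - j + 1 := by
    intro j hj
    have hj2 : j ≤ q := (mem_Icc.mp hj).2
    have : (j : ℝ) ≤ q := by exact_mod_cast hj2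
    linarith
  have hSpos : 0 < S := by
    rw [hS]
    apply Finset.sum_pos
    · intro j hj
      exact Real.rpow_pos_of_pos (hterm j hj) _
    · exact ⟨1, mem_Icc.mpr ⟨le_refl 1, hq⟩⟩
  have key1 : ∀ j ∈ Icc 1 q,
      p j ^ (1 - α) = S⁻¹ * (q : ℝ) * (((q : ℝ) - j + 1) ^ ((α - 1) / α)) := by
    intro j hj
    have hx := hterm j hj
    rw [hp j hj, Real.div_rpow (Real.rpow_nonneg hSpos.le _) (by positivity),
      Real.mul_rpow (by positivity) (by positivity),
      ← Real.rpow_mul hSpos.le, ← Real.rpow_mul hqpos.le, ← Real.rpow_mul hx.le]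
    have e1 : 1 / (α - 1) * (1 - α) = -1 := by field_simp; ring
    have e2 : 1 / α * (1 - α) = -((α - 1) / α) := by field_simp; ring
    rw [e1, e2, Real.rpow_neg_one, Real.rpow_neg_one, Real.rpow_neg hx.le]
    have hxp : (0 : ℝ) < ((q : ℝ) - j + 1) ^ ((α - 1) / α) :=
      Real.rpow_pos_of_pos hx _
    field_simp
  have key2 : ∀ j ∈ Icc 1 q,
      ((q : ℝ) - j + 1) * p j =
        S ^ (1 / (α - 1)) / (q : ℝ) ^ (1 / (α - 1)) *
          (((q : ℝ) - j + 1) ^ ((α - 1) / α)) := by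
    intro j hj
    have hx := hterm j hj
    have e3 : ((q : ℝ) - j + 1) ^ ((α - 1) / α)
        = ((q : ℝ) - j + 1) / ((q : ℝ) - j + 1) ^ (1 / α) := by
      rw [show (α - 1) / α = 1 - 1 / α by field_simp, Real.rpow_sub hx, Real.rpow_one]
    rw [hp j hj, e3]
    have hxp : (0 : ℝ) < ((q : ℝ) - j + 1) ^ (1 / α) := Real.rpow_pos_of_pos hx _
    field_simp
  constructor
  · rw [Finset.sum_congr rfl key1, ← Finset.mul_sum, ← hS]
    field_simp
  · rw [Finset.sum_congr rfl key2, ← Finset.mul_sum, ← hS]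
    have e4 : S ^ (α / (α - 1)) = S ^ (1 / (α - 1)) * S := by
      rw [show α / (α - 1) = 1 / (α - 1) + 1 by field_simp; ring, Real.rpow_add hSpos,
        Real.rpow_one]
    have h1α : 1 - α ≠ 0 := by linarith
    have e5 : (q : ℝ) ^ (1 / (1 - α)) = ((q : ℝ) ^ (1 / (α - 1)))⁻¹ := by
      rw [← Real.rpow_neg hqpos.le]
      congr 1
      field_simp
      ring
    rw [e4, e5]
    field_simp
end

section
/- Let α > 1 be real and q a positive integer. If positive reals p_1, …, p_q satisfy ∑_{j=1}^q p_j^{1−α} = q and ∑_{j=1}^q (q−j+1)·p_j = (∑_{j=1}^q (q−j+1)^{(α−1)/α})^{α/(α−1)} · q^{1/(1−α)} (the minimum value), then p_j = (∑_{k=1}^q (q−k+1)^{(α−1)/α})^{1/(α−1)} / ( q^{1/(α−1)} · (q−j+1)^{1/α} ) for every j; i.e., the minimizer of the convex program is unique. -/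
open Finset

lemma young_eq {θ x y : ℝ} (hθ : 0 < θ) (hθ1 : θ < 1) (hx : 0 < x) (hy : 0 < y)
    (h : θ * x + (1 - θ) * y ≤ x ^ θ * y ^ (1 - θ)) : x = y := by
  by_contra hne
  have key := strictConcaveOn_log_Ioi.2 (Set.mem_Ioi.2 hx) (Set.mem_Ioi.2 hy) hne hθ
      (by linarith : (0:ℝ) < 1 - θ) (by ring)
  have ht1 : 0 < 1 - θ := by linarith
  have hxy : 0 < θ * x + (1 - θ) * y := by positivity
  have h2 : x ^ θ * y ^ (1 - θ) < θ * x + (1 - θ) * y := by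
    calc x ^ θ * y ^ (1 - θ)
        = Real.exp (θ * Real.log x + (1 - θ) * Real.log y) := by
          rw [Real.exp_add, ← Real.log_rpow hx, ← Real.log_rpow hy, Real.exp_log (by positivity),
            Real.exp_log (by positivity)]
      _ < Real.exp (Real.log (θ * x + (1 - θ) * y)) := by
          apply Real.exp_lt_exp.2; simpa using key
      _ = θ * x + (1 - θ) * y := Real.exp_log hxy
  linarith

/-- Uniqueness of the minimizer of the convex program: if positive `p₁, …, p_q` satisfy the
energy constraint with equality and attain the minimum objective value, then they coincide
with the explicit optimal durations. -/
theorem convex_program_unique_minimizer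
    (α : ℝ) (hα : 1 < α) (q : ℕ) (hq : 0 < q) (p : ℕ → ℝ)
    (hp : ∀ j ∈ Icc 1 q, 0 < p j)
    (henergy : ∑ j ∈ Icc 1 q, p j ^ (1 - α) = (q : ℝ))
    (hvalue : ∑ j ∈ Icc 1 q, ((q : ℝ) - j + 1) * p j =
      (∑ j ∈ Icc 1 q, ((q : ℝ) - j + 1) ^ ((α - 1) / α)) ^ (α / (α - 1)) *
        (q : ℝ) ^ (1 / (1 - α))) :
    ∀ j ∈ Icc 1 q,
      p j = (∑ k ∈ Icc 1 q, ((q : ℝ) - k + 1) ^ ((α - 1) / α)) ^ (1 / (α - 1)) /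
        ((q : ℝ) ^ (1 / (α - 1)) * ((q : ℝ) - j + 1) ^ (1 / α)) := by
  have hα0 : (0:ℝ) < α := by linarith
  have hα1 : (0:ℝ) < α - 1 := by linarith
  have hαne : α ≠ 0 := ne_of_gt hα0
  have hα1ne : α - 1 ≠ 0 := ne_of_gt hα1
  have h1αne : 1 - α ≠ 0 := by intro h; apply hα1ne; linarith
  set θ : ℝ := (α - 1) / α with hθdef
  have hθ : 0 < θ := by positivity
  have hθ1 : θ < 1 := by rw [hθdef, div_lt_one hα0]; linarith
  set w : ℕ → ℝ := fun j => (q : ℝ) - j + 1 with hwdef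
  have hw : ∀ j ∈ Icc 1 q, 0 < w j := by
    intro j hj
    simp only [mem_Icc] at hj
    have : (j:ℝ) ≤ q := Nat.cast_le.2 hj.2
    simp only [hwdef]; linarith
  set S : ℝ := ∑ k ∈ Icc 1 q, w k ^ θ with hSdef
  set A : ℝ := ∑ j ∈ Icc 1 q, w j * p j with hAdef
  have hne : (Icc 1 q).Nonempty := ⟨1, mem_Icc.2 ⟨le_rfl, hq⟩⟩
  have hS : 0 < S := Finset.sum_pos (fun k hk => Real.rpow_pos_of_pos (hw k hk) θ) hne
  have hA : 0 < A := Finset.sum_pos (fun j hj => mul_pos (hw j hj) (hp j hj)) hne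
  have hqR : (0:ℝ) < q := Nat.cast_pos.2 hq
  have hAval : A = S ^ (α/(α-1)) * (q:ℝ) ^ (1/(1-α)) := hvalue
  -- A^θ = S * q^(-(1/α))
  have hAθ : A ^ θ = S * (q:ℝ) ^ (-(1/α)) := by
    rw [hAval, Real.mul_rpow (by positivity) (by positivity),
      ← Real.rpow_mul hS.le, ← Real.rpow_mul hqR.le]
    have e1 : α/(α-1) * θ = 1 := by rw [hθdef]; field_simp
    have e2 : 1/(1-α) * θ = -(1/α) := by rw [hθdef]; field_simp; ring
    rw [e1, e2, Real.rpow_one]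
  have hAq : A ^ θ * (q:ℝ) ^ (1-θ) = S := by
    rw [hAθ, mul_assoc, ← Real.rpow_add hqR]
    have e3 : -(1/α) + (1-θ) = 0 := by rw [hθdef]; field_simp; ring
    rw [e3, Real.rpow_zero, mul_one]
  -- the key equality x j = y j
  have key : ∀ j ∈ Icc 1 q, w j * p j / A = p j ^ (1-α) / q := by
    have hterm : ∀ j ∈ Icc 1 q,
        (w j * p j / A) ^ θ * (p j ^ (1-α) / (q:ℝ)) ^ (1-θ) = w j ^ θ / S := by
      intro j hj
      have hpj := hp j hj
      have hwj := hw j hj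
      rw [Real.div_rpow (by positivity) hA.le, Real.div_rpow (by positivity) hqR.le,
        Real.mul_rpow hwj.le hpj.le, ← Real.rpow_mul hpj.le]
      rw [div_mul_div_comm, mul_assoc, ← Real.rpow_add hpj]
      have e4 : θ + (1-α) * (1-θ) = 0 := by rw [hθdef]; field_simp; ring
      rw [e4, Real.rpow_zero, mul_one, hAq]
    have hsx : ∑ j ∈ Icc 1 q, w j * p j / A = 1 := by
      rw [← Finset.sum_div, ← hAdef, div_self hA.ne']
    have hsy : ∑ j ∈ Icc 1 q, p j ^ (1-α) / (q:ℝ) = 1 := by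
      rw [← Finset.sum_div, henergy, div_self hqR.ne']
    have hsg : ∑ j ∈ Icc 1 q, (w j * p j / A) ^ θ * (p j ^ (1-α) / (q:ℝ)) ^ (1-θ) = 1 := by
      rw [Finset.sum_congr rfl hterm, ← Finset.sum_div, ← hSdef, div_self hS.ne']
    have hsum : ∑ j ∈ Icc 1 q, (θ * (w j * p j / A) + (1-θ) * (p j ^ (1-α) / (q:ℝ))
        - (w j * p j / A) ^ θ * (p j ^ (1-α) / (q:ℝ)) ^ (1-θ)) = 0 := by
      rw [Finset.sum_sub_distrib, Finset.sum_add_distrib, ← Finset.mul_sum, ← Finset.mul_sum,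
        hsx, hsy, hsg]
      ring
    have hnn : ∀ j ∈ Icc 1 q, 0 ≤ θ * (w j * p j / A) + (1-θ) * (p j ^ (1-α) / (q:ℝ))
        - (w j * p j / A) ^ θ * (p j ^ (1-α) / (q:ℝ)) ^ (1-θ) := by
      intro j hj
      have hpj := hp j hj
      have hwj := hw j hj
      have := Real.geom_mean_le_arith_mean2_weighted hθ.le (by linarith : (0:ℝ) ≤ 1-θ)
        (by positivity : (0:ℝ) ≤ w j * p j / A) (by positivity : (0:ℝ) ≤ p j ^ (1-α) / (q:ℝ))
        (by ring)
      linarith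
    intro j hj
    have hz := (Finset.sum_eq_zero_iff_of_nonneg hnn).1 hsum j hj
    have hpj := hp j hj
    have hwj := hw j hj
    exact young_eq hθ hθ1 (by positivity) (by positivity) (by linarith)
  -- solve for p j
  intro j hj
  have hpj := hp j hj
  have hwj := hw j hj
  have heq := key j hj
  have h1 : p j ^ (1-α) * p j ^ (α-1) = 1 := by
    rw [← Real.rpow_add hpj]; norm_num
  have h2 : p j * p j ^ (α-1) = p j ^ α := by
    nth_rewrite 1 [← Real.rpow_one (p j)]
    rw [← Real.rpow_add hpj]; ring_nf
  have h3 : w j * p j * (q:ℝ) = A * p j ^ (1-α) := by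
    rw [div_eq_div_iff hA.ne' hqR.ne'] at heq
    linarith
  have h4 : w j * (p j ^ α) * (q:ℝ) = A := by
    calc w j * (p j ^ α) * (q:ℝ) = (w j * p j * (q:ℝ)) * p j ^ (α-1) := by
          rw [← h2]; ring
      _ = (A * p j ^ (1-α)) * p j ^ (α-1) := by rw [h3]
      _ = A * (p j ^ (1-α) * p j ^ (α-1)) := by ring
      _ = A := by rw [h1, mul_one]
  have hpα : p j ^ α = A / ((q:ℝ) * w j) := by
    rw [eq_div_iff (by positivity)]
    linarith [h4]
  have h5 : p j = (A / ((q:ℝ) * w j)) ^ (1/α) := by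
    rw [← hpα, ← Real.rpow_mul hpj.le, mul_one_div, div_self hαne, Real.rpow_one]
  rw [h5, Real.div_rpow hA.le (by positivity), Real.mul_rpow hqR.le hwj.le]
  have e5 : A ^ (1/α) = S ^ (1/(α-1)) * ((q:ℝ) ^ (1/α) / (q:ℝ) ^ (1/(α-1))) := by
    rw [hAval, Real.mul_rpow (by positivity) (by positivity),
      ← Real.rpow_mul hS.le, ← Real.rpow_mul hqR.le, ← Real.rpow_sub hqR]
    congr 2
    · field_simp
    · field_simp; ring
  rw [e5]
  have hq1 : (0:ℝ) < (q:ℝ) ^ (1/α) := Real.rpow_pos_of_pos hqR _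
  have hq2 : (0:ℝ) < (q:ℝ) ^ (1/(α-1)) := Real.rpow_pos_of_pos hqR _
  have hw1 : (0:ℝ) < w j ^ (1/α) := Real.rpow_pos_of_pos hwj _
  field_simp
  exact (div_self hw1.ne').symm
end

section
/- Let α > 1 and E > 0 be reals, m and n positive integers, and for j = 1, …, n let W_j > 0 be reals and size_j positive integers. For all positive reals p_1, …, p_n satisfying the energy constraint ∑_{j=1}^n W_j^α · p_j^{1−α} · size_j ≤ E, one has (1/m)·∑_{j=1}^n ∑_{i=1}^{j} size_i·p_i + (1/2)·∑_{j=1}^n p_j − (1/(2m))·∑_{j=1}^n size_j·p_j ≥ (E^{1/(1−α)}/m) · ( ∑_{i=1}^n W_i · size_i^{1/α} · ( size_i·(n−i+0.5) + 0.5·m )^{(α−1)/α} )^{α/(α−1)}. -/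
open Finset

/-- Lower bound `LB(π)` for rigid jobs: any positive durations satisfying the energy budget
make the total-completion-time lower-bound expression (4) at least the closed form (7). -/
theorem rigid_lower_bound_LB
    (α E : ℝ) (hα : 1 < α) (hE : 0 < E) (m n : ℕ) (hm : 0 < m) (hn : 0 < n)
    (W : ℕ → ℝ) (size : ℕ → ℕ)
    (hW : ∀ j ∈ Icc 1 n, 0 < W j) (hsize : ∀ j ∈ Icc 1 n, 0 < size j)
    (p : ℕ → ℝ) (hp : ∀ j ∈ Icc 1 n, 0 < p j)
    (henergy : ∑ j ∈ Icc 1 n, W j ^ α * p j ^ (1 - α) * (size j : ℝ) ≤ E) :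
    (1 / (m : ℝ)) * ∑ j ∈ Icc 1 n, ∑ i ∈ Icc 1 j, (size i : ℝ) * p i
        + (1 / 2) * ∑ j ∈ Icc 1 n, p j
        - (1 / (2 * (m : ℝ))) * ∑ j ∈ Icc 1 n, (size j : ℝ) * p j ≥
      (E ^ (1 / (1 - α)) / (m : ℝ)) *
        (∑ i ∈ Icc 1 n, W i * (size i : ℝ) ^ (1 / α) *
          ((size i : ℝ) * ((n : ℝ) - i + 0.5) + 0.5 * (m : ℝ)) ^ ((α - 1) / α))
          ^ (α / (α - 1)) := by
  have hm' : (0 : ℝ) < m := by exact_mod_cast hm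
  have hα0 : (0 : ℝ) < α := by linarith
  have hα1 : (0 : ℝ) < α - 1 := by linarith
  set c : ℕ → ℝ := fun i => (size i : ℝ) * ((n : ℝ) - i + 0.5) + 0.5 * (m : ℝ) with hc
  have hcpos : ∀ i ∈ Icc 1 n, 0 < c i := by
    intro i hi
    have h1 : (1 : ℝ) ≤ (size i : ℝ) := by exact_mod_cast hsize i hi
    have h2 : (i : ℝ) ≤ (n : ℝ) := by exact_mod_cast (mem_Icc.1 hi).2
    have : (0:ℝ) < (size i : ℝ) * ((n : ℝ) - i + 0.5) := by
      apply mul_pos (by linarith) (by norm_num; linarith)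
    have : (0:ℝ) < 0.5 * (m : ℝ) := by positivity
    simp only [hc]
    nlinarith [mul_pos (show (0:ℝ) < (size i : ℝ) by linarith)
      (show (0:ℝ) < (n : ℝ) - i + 0.5 by norm_num; linarith)]
  set T : ℝ := ∑ i ∈ Icc 1 n, c i * p i with hT
  have hTnn : 0 ≤ T := sum_nonneg fun i hi => le_of_lt (mul_pos (hcpos i hi) (hp i hi))
  -- Step A: the LHS equals T / m
  have hLHS : (1 / (m : ℝ)) * ∑ j ∈ Icc 1 n, ∑ i ∈ Icc 1 j, (size i : ℝ) * p i
        + (1 / 2) * ∑ j ∈ Icc 1 n, p j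
        - (1 / (2 * (m : ℝ))) * ∑ j ∈ Icc 1 n, (size j : ℝ) * p j = T / m := by
    have hswap : ∑ j ∈ Icc 1 n, ∑ i ∈ Icc 1 j, (size i : ℝ) * p i
        = ∑ i ∈ Icc 1 n, ((n + 1 - i : ℕ) : ℝ) * ((size i : ℝ) * p i) := by
      rw [Finset.sum_comm' (s' := fun i => Icc i n) (t' := Icc 1 n)
        (by intro x y; simp only [mem_Icc]; omega)]
      refine sum_congr rfl fun i hi => ?_
      rw [Finset.sum_const, Nat.card_Icc, nsmul_eq_mul]
    rw [hswap, hT, Finset.mul_sum, Finset.mul_sum, Finset.mul_sum, Finset.sum_div,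
      ← Finset.sum_add_distrib, ← Finset.sum_sub_distrib]
    refine sum_congr rfl fun i hi => ?_
    have hi' := mem_Icc.1 hi
    have hcast : ((n + 1 - i : ℕ) : ℝ) = (n : ℝ) + 1 - (i : ℝ) := by
      have : i ≤ n := hi'.2
      push_cast [Nat.cast_sub (by omega : i ≤ n + 1)]
      ring
    rw [hcast, hc]
    field_simp
    ring
  -- Step B: Hölder
  set S : ℝ := ∑ i ∈ Icc 1 n, W i * (size i : ℝ) ^ (1 / α) * c i ^ ((α - 1) / α) with hS
  have hpq : Real.HolderConjugate α (α / (α - 1)) := Real.HolderConjugate.conjExponent hα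
  have holder : S ≤ E ^ (1/α) * T ^ ((α - 1)/α) := by
    have key := Real.inner_le_Lp_mul_Lq_of_nonneg (Icc 1 n)
      (f := fun i => W i * (size i : ℝ) ^ (1 / α) * p i ^ ((1 - α) / α))
      (g := fun i => c i ^ ((α - 1) / α) * p i ^ ((α - 1) / α)) hpq
      (fun i hi => mul_nonneg (mul_nonneg (hW i hi).le
        (Real.rpow_nonneg (Nat.cast_nonneg _) _)) (Real.rpow_nonneg (hp i hi).le _))
      (fun i hi => mul_nonneg (Real.rpow_nonneg (hcpos i hi).le _)
        (Real.rpow_nonneg (hp i hi).le _))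
    have hfg : ∀ i ∈ Icc 1 n,
        (W i * (size i : ℝ) ^ (1 / α) * p i ^ ((1 - α) / α)) *
          (c i ^ ((α - 1) / α) * p i ^ ((α - 1) / α))
          = W i * (size i : ℝ) ^ (1 / α) * c i ^ ((α - 1) / α) := by
      intro i hi
      have hpi := hp i hi
      rw [show (W i * (size i : ℝ) ^ (1 / α) * p i ^ ((1 - α) / α)) *
          (c i ^ ((α - 1) / α) * p i ^ ((α - 1) / α))
          = W i * (size i : ℝ) ^ (1 / α) * c i ^ ((α - 1) / α) *
            (p i ^ ((1 - α) / α) * p i ^ ((α - 1) / α)) by ring,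
        ← Real.rpow_add hpi,
        show (1 - α)/α + (α - 1)/α = 0 by ring, Real.rpow_zero, mul_one]
    have hfα : ∀ i ∈ Icc 1 n,
        (W i * (size i : ℝ) ^ (1 / α) * p i ^ ((1 - α) / α)) ^ α
          = W i ^ α * p i ^ (1 - α) * (size i : ℝ) := by
      intro i hi
      have hWi := hW i hi
      have hpi := hp i hi
      have hsi : (0:ℝ) < (size i : ℝ) := by exact_mod_cast hsize i hi
      rw [Real.mul_rpow (by positivity) (by positivity),
        Real.mul_rpow (le_of_lt hWi) (by positivity),
        ← Real.rpow_mul hsi.le, ← Real.rpow_mul hpi.le,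
        one_div, inv_mul_cancel₀ hα0.ne', div_mul_cancel₀ _ hα0.ne', Real.rpow_one]
      ring
    have hgq : ∀ i ∈ Icc 1 n,
        (c i ^ ((α - 1) / α) * p i ^ ((α - 1) / α)) ^ (α / (α - 1)) = c i * p i := by
      intro i hi
      have hci := hcpos i hi
      have hpi := hp i hi
      rw [Real.mul_rpow (by positivity) (by positivity),
        ← Real.rpow_mul hci.le, ← Real.rpow_mul hpi.le,
        show (α - 1) / α * (α / (α - 1)) = 1 by field_simp,
        Real.rpow_one, Real.rpow_one]
    rw [Finset.sum_congr rfl hfg, Finset.sum_congr rfl hfα, Finset.sum_congr rfl hgq] at key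
    rw [hS, hT]
    refine key.trans ?_
    have h1 : (∑ i ∈ Icc 1 n, W i ^ α * p i ^ (1 - α) * (size i : ℝ)) ^ (1/α)
        ≤ E ^ (1/α) := Real.rpow_le_rpow
      (sum_nonneg fun i hi => mul_nonneg (mul_nonneg
        (Real.rpow_nonneg (hW i hi).le _) (Real.rpow_nonneg (hp i hi).le _))
        (Nat.cast_nonneg _)) henergy (by positivity)
    have h2 : (0:ℝ) ≤ (∑ i ∈ Icc 1 n, c i * p i) ^ (1 / (α / (α - 1))) := by
      apply Real.rpow_nonneg hTnn
    calc (∑ i ∈ Icc 1 n, W i ^ α * p i ^ (1 - α) * (size i : ℝ)) ^ (1/α) *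
            (∑ i ∈ Icc 1 n, c i * p i) ^ (1 / (α / (α - 1)))
        ≤ E ^ (1/α) * (∑ i ∈ Icc 1 n, c i * p i) ^ (1 / (α / (α - 1))) :=
          mul_le_mul_of_nonneg_right h1 h2
      _ = E ^ (1/α) * (∑ i ∈ Icc 1 n, c i * p i) ^ ((α - 1)/α) := by
          rw [one_div_div]
  -- Step C: conclude
  have hSnn : 0 ≤ S := sum_nonneg fun i hi => mul_nonneg (mul_nonneg (hW i hi).le
    (Real.rpow_nonneg (Nat.cast_nonneg _) _)) (Real.rpow_nonneg (hcpos i hi).le _)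
  have hq : (0:ℝ) < α / (α - 1) := by positivity
  have step : S ^ (α / (α - 1)) ≤ E ^ (1/(α-1)) * T := by
    calc S ^ (α / (α - 1)) ≤ (E ^ (1/α) * T ^ ((α - 1)/α)) ^ (α / (α - 1)) :=
          Real.rpow_le_rpow hSnn holder hq.le
      _ = E ^ (1/(α-1)) * T := by
          rw [Real.mul_rpow (by positivity) (by positivity),
            ← Real.rpow_mul hE.le, ← Real.rpow_mul hTnn,
            show (1/α) * (α / (α - 1)) = 1/(α-1) by field_simp,
            show (α - 1)/α * (α / (α - 1)) = 1 by field_simp,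
            Real.rpow_one]
  have hfinal : E ^ (1/(1-α)) * S ^ (α / (α - 1)) ≤ T := by
    have hEpos : (0:ℝ) < E ^ (1/(1-α)) := Real.rpow_pos_of_pos hE _
    have := mul_le_mul_of_nonneg_left step hEpos.le
    calc E ^ (1/(1-α)) * S ^ (α / (α - 1))
        ≤ E ^ (1/(1-α)) * (E ^ (1/(α-1)) * T) := this
      _ = (E ^ (1/(1-α)) * E ^ (1/(α-1))) * T := by ring
      _ = T := by
          rw [← Real.rpow_add hE, show (1/(1-α) + 1/(α-1) : ℝ) = 0 by
            rw [show (1-α:ℝ) = -(α-1) by ring, one_div, one_div, inv_neg]; ring,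
            Real.rpow_zero, one_mul]
  rw [ge_iff_le, hLHS]
  rw [div_mul_eq_mul_div, div_le_div_iff_of_pos_right hm']
  exact hfinal
end

section
/- Let α > 1 and E > 0 be reals, m and n positive integers, W_j > 0 reals and size_j positive integers for j = 1, …, n. Define T = ∑_{j=1}^n W_j · size_j^{1/α} · ( size_j·(n−j+0.5) + 0.5·m )^{(α−1)/α} and p̄_i = E^{1/(1−α)} · W_i · size_i^{1/α} · ( size_i·(n−i+0.5) + 0.5·m )^{−1/α} · T^{1/(α−1)} for i = 1, …, n. Then ∑_{j=1}^n W_j^α · p̄_j^{1−α} · size_j = E, and (1/m)·∑_{j=1}^n ∑_{i=1}^{j} size_i·p̄_i + (1/2)·∑_{j=1}^n p̄_j − (1/(2m))·∑_{j=1}^n size_j·p̄_j = (E^{1/(1−α)}/m) · T^{α/(α−1)}; that is, these explicit durations are feasible and attain the lower bound LB(π). -/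
open Finset

lemma rig_aux1 {α E W s B T : ℝ} (hα : 1 < α) (hE : 0 < E) (hW : 0 < W)
    (hs : 0 < s) (hB : 0 < B) (hT : 0 < T) :
    W ^ α * (E ^ (1 / (1 - α)) * W * s ^ (1 / α) * B ^ (-(1 / α)) * T ^ (1 / (α - 1)))
        ^ (1 - α) * s
      = (E / T) * (W * s ^ (1 / α) * B ^ ((α - 1) / α)) := by
  have hα0 : α ≠ 0 := by linarith
  have h1 : (1 : ℝ) - α ≠ 0 := by intro h; linarith
  have h2 : α - 1 ≠ 0 := by intro h; linarith
  have e1 : (1 / (1 - α)) * (1 - α) = 1 := by field_simp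
  have e2 : (1 / (α - 1)) * (1 - α) = -1 := by field_simp; ring
  have e3 : -(1 / α) * (1 - α) = (α - 1) / α := by field_simp; ring
  have e4 : (1 / α) * (1 - α) = (1 - α) / α := by ring
  have e5 : s ^ (1 / α) = s ^ ((1 - α) / α) * s := by
    rw [show (1 : ℝ) / α = (1 - α) / α + 1 by field_simp; ring, Real.rpow_add hs, Real.rpow_one]
  have hw : W ^ α * W ^ (1 - α) = W := by
    rw [← Real.rpow_add hW]; norm_num
  rw [Real.mul_rpow (by positivity) (by positivity),
      Real.mul_rpow (by positivity) (by positivity),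
      Real.mul_rpow (by positivity) (by positivity),
      Real.mul_rpow (by positivity) (by positivity),
      ← Real.rpow_mul hE.le, ← Real.rpow_mul hs.le, ← Real.rpow_mul hB.le,
      ← Real.rpow_mul hT.le, e1, e2, e3, e4, e5, Real.rpow_one, Real.rpow_neg_one]
  field_simp
  linear_combination hw

lemma rig_aux2 {α E W s B T : ℝ} (hα : 1 < α) (hB : 0 < B) :
    (E ^ (1 / (1 - α)) * W * s ^ (1 / α) * B ^ (-(1 / α)) * T ^ (1 / (α - 1))) * B
      = (E ^ (1 / (1 - α)) * T ^ (1 / (α - 1))) * (W * s ^ (1 / α) * B ^ ((α - 1) / α)) := by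
  have hα0 : α ≠ 0 := by linarith
  have e : B ^ ((α - 1) / α) = B ^ (-(1 / α)) * B := by
    rw [show (α - 1) / α = -(1 / α) + 1 by field_simp; ring, Real.rpow_add hB, Real.rpow_one]
  rw [e]; ring

/-- The explicit durations computed by the Lagrangian method for rigid jobs are feasible
(the energy constraint holds with equality) and attain the lower bound `LB(π)`. -/
theorem rigid_optimal_durations
    (α E : ℝ) (hα : 1 < α) (hE : 0 < E) (m n : ℕ) (hm : 0 < m) (hn : 0 < n)
    (W : ℕ → ℝ) (size : ℕ → ℕ)
    (hW : ∀ j ∈ Icc 1 n, 0 < W j) (hsize : ∀ j ∈ Icc 1 n, 0 < size j)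
    (T : ℝ)
    (hT : T = ∑ j ∈ Icc 1 n, W j * (size j : ℝ) ^ (1 / α) *
      ((size j : ℝ) * ((n : ℝ) - j + 0.5) + 0.5 * (m : ℝ)) ^ ((α - 1) / α))
    (p : ℕ → ℝ)
    (hp : ∀ i ∈ Icc 1 n,
      p i = E ^ (1 / (1 - α)) * W i * (size i : ℝ) ^ (1 / α) *
        ((size i : ℝ) * ((n : ℝ) - i + 0.5) + 0.5 * (m : ℝ)) ^ (-(1 / α)) *
          T ^ (1 / (α - 1))) :
    (∑ j ∈ Icc 1 n, W j ^ α * p j ^ (1 - α) * (size j : ℝ) = E) ∧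
      (1 / (m : ℝ)) * ∑ j ∈ Icc 1 n, ∑ i ∈ Icc 1 j, (size i : ℝ) * p i
          + (1 / 2) * ∑ j ∈ Icc 1 n, p j
          - (1 / (2 * (m : ℝ))) * ∑ j ∈ Icc 1 n, (size j : ℝ) * p j =
        (E ^ (1 / (1 - α)) / (m : ℝ)) * T ^ (α / (α - 1)) := by
  set B : ℕ → ℝ := fun j => (size j : ℝ) * ((n : ℝ) - j + 0.5) + 0.5 * (m : ℝ) with hB
  set g : ℕ → ℝ := fun j => W j * (size j : ℝ) ^ (1 / α) * B j ^ ((α - 1) / α) with hg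
  have hBpos : ∀ j ∈ Icc 1 n, 0 < B j := by
    intro j hj
    obtain ⟨hj1, hj2⟩ := mem_Icc.mp hj
    have h1 : (j : ℝ) ≤ n := by exact_mod_cast hj2
    have h2 : (0 : ℝ) ≤ (size j : ℝ) := Nat.cast_nonneg _
    have h3 : (0 : ℝ) < (m : ℝ) := by exact_mod_cast hm
    simp only [hB]
    nlinarith
  have hgpos : ∀ j ∈ Icc 1 n, 0 < g j := by
    intro j hj
    have := hW j hj
    have hs : (0 : ℝ) < (size j : ℝ) := by exact_mod_cast hsize j hj
    have := hBpos j hj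
    have := Real.rpow_pos_of_pos hs (1 / α)
    have := Real.rpow_pos_of_pos (hBpos j hj) ((α - 1) / α)
    positivity
  have hTpos : 0 < T := by
    rw [hT]
    apply Finset.sum_pos
    · intro j hj; exact hgpos j hj
    · exact ⟨1, mem_Icc.mpr ⟨le_refl 1, hn⟩⟩
  have hTg : T = ∑ j ∈ Icc 1 n, g j := hT
  constructor
  · have : ∀ j ∈ Icc 1 n,
        W j ^ α * p j ^ (1 - α) * (size j : ℝ) = (E / T) * g j := by
      intro j hj
      rw [hp j hj]
      exact rig_aux1 hα hE (hW j hj) (by exact_mod_cast hsize j hj) (hBpos j hj) hTpos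
    rw [Finset.sum_congr rfl this, ← Finset.mul_sum, ← hTg, div_mul_cancel₀ _ (ne_of_gt hTpos)]
  · have hm' : (m : ℝ) ≠ 0 := by positivity
    have swap : ∑ j ∈ Icc 1 n, ∑ i ∈ Icc 1 j, (size i : ℝ) * p i
        = ∑ i ∈ Icc 1 n, ((n : ℝ) - i + 1) * ((size i : ℝ) * p i) := by
      simp only [← Finset.Ico_add_one_right_eq_Icc]
      rw [← sum_Ico_Ico_comm 1 (n + 1) (fun i _ => (size i : ℝ) * p i)]
      apply Finset.sum_congr rfl
      intro i hi
      rw [Finset.sum_const, Nat.card_Ico, nsmul_eq_mul]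
      obtain ⟨hi1, hi2⟩ := Finset.mem_Ico.mp hi
      congr 1
      have : i ≤ n + 1 := by omega
      push_cast [Nat.cast_sub this]
      ring
    have comb : (1 / (m : ℝ)) * ∑ j ∈ Icc 1 n, ∑ i ∈ Icc 1 j, (size i : ℝ) * p i
          + (1 / 2) * ∑ j ∈ Icc 1 n, p j
          - (1 / (2 * (m : ℝ))) * ∑ j ∈ Icc 1 n, (size j : ℝ) * p j
        = ∑ i ∈ Icc 1 n, (1 / (m : ℝ)) * (p i * B i) := by
      rw [swap, Finset.mul_sum, Finset.mul_sum, Finset.mul_sum, ← Finset.sum_add_distrib,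
        ← Finset.sum_sub_distrib]
      apply Finset.sum_congr rfl
      intro i _
      simp only [hB]
      field_simp
      ring
    rw [comb]
    have hpB : ∀ i ∈ Icc 1 n,
        (1 / (m : ℝ)) * (p i * B i)
          = (1 / (m : ℝ)) * ((E ^ (1 / (1 - α)) * T ^ (1 / (α - 1))) * g i) := by
      intro i hi
      rw [hp i hi]
      congr 1
      exact rig_aux2 hα (hBpos i hi)
    rw [Finset.sum_congr rfl hpB, ← Finset.mul_sum, ← Finset.mul_sum, ← hTg]
    have hT' : T ^ (1 / (α - 1)) * T = T ^ (α / (α - 1)) := by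
      have h2 : α - 1 ≠ 0 := by intro h; linarith
      rw [show α / (α - 1) = 1 / (α - 1) + 1 by field_simp; ring, Real.rpow_add hTpos,
        Real.rpow_one]
    rw [mul_assoc, hT']
    ring
end

section
/- Let α > 1 be real, W > 0 real, m and n positive integers, and s_1 ≤ s_2 ≤ … ≤ s_n positive integers. For every permutation π of {1, …, n}: ∑_{i=1}^n W·s_i·( n−i+0.5 + 0.5·m/s_i )^{(α−1)/α} ≤ ∑_{i=1}^n W·s_{π(i)}·( n−i+0.5 + 0.5·m/s_{π(i)} )^{(α−1)/α}; that is, among all orderings of the sizes, the function G(π) = ∑_{i=1}^n W·size_{π_i}·( n−i+0.5 + 0.5·m/size_{π_i} )^{(α−1)/α} is minimized when the jobs are ordered by non-decreasing number of required processors. -/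
open Finset

/-- Concave functions are submodular along a chain. -/
lemma concave_diff {f : ℝ → ℝ} (hf : ConcaveOn ℝ (Set.Ici 0) f)
    {x1 x2 x3 x4 : ℝ} (h1 : 0 ≤ x1) (h12 : x1 ≤ x2) (h24 : x2 ≤ x4)
    (hsum : x1 + x4 = x2 + x3) :
    f x1 + f x4 ≤ f x2 + f x3 := by
  rcases eq_or_lt_of_le (h12.trans h24) with h | h
  · have hx2 : x2 = x1 := le_antisymm (h ▸ h24) h12
    have hx3 : x3 = x4 := by linarith
    rw [hx2, hx3]
  · set t : ℝ := (x2 - x1) / (x4 - x1) with ht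
    have hden : 0 < x4 - x1 := by linarith
    have ht0 : 0 ≤ t := div_nonneg (by linarith) hden.le
    have ht1 : t ≤ 1 := by
      rw [div_le_one hden]; linarith
    have hmem1 : x1 ∈ Set.Ici (0:ℝ) := h1
    have hmem4 : x4 ∈ Set.Ici (0:ℝ) := by simp only [Set.mem_Ici]; linarith
    have e2 : (1 - t) * x1 + t * x4 = x2 := by
      rw [ht]; linear_combination (div_mul_cancel₀ (x2 - x1) hden.ne' : (x2 - x1) / (x4 - x1) * (x4 - x1) = x2 - x1)
    have e3 : t * x1 + (1 - t) * x4 = x3 := by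
      have : x3 = x1 + x4 - x2 := by linarith
      rw [this, ht]; linear_combination -(div_mul_cancel₀ (x2 - x1) hden.ne' : (x2 - x1) / (x4 - x1) * (x4 - x1) = x2 - x1)
    have c2 := hf.2 hmem1 hmem4 (by linarith : (0:ℝ) ≤ 1 - t) ht0 (by ring)
    have c3 := hf.2 hmem1 hmem4 ht0 (by linarith : (0:ℝ) ≤ 1 - t) (by ring)
    rw [smul_eq_mul, smul_eq_mul, smul_eq_mul, smul_eq_mul] at c2 c3
    rw [e2] at c2
    rw [e3] at c3
    nlinarith [c2, c3]

/-- The key exchange inequality. -/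
lemma exchange {β b c c' v v' : ℝ} (hβ0 : 0 < β) (hβ1 : β < 1) (hb : 0 < b)
    (hc' : 0 < c') (hcc : c' ≤ c) (hv : 0 < v) (hvv : v ≤ v') :
    v * (c + b / v) ^ β + v' * (c' + b / v') ^ β ≤
      v * (c' + b / v) ^ β + v' * (c + b / v') ^ β := by
  have hv' : 0 < v' := lt_of_lt_of_le hv hvv
  set u : ℝ := b / v with hu
  set u' : ℝ := b / v' with hu'
  have hu0 : 0 < u := div_pos hb hv
  have hu'0 : 0 < u' := div_pos hb hv'
  have huu : u' ≤ u := div_le_div_of_nonneg_left hb.le hv hvv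
  have hconc : ConcaveOn ℝ (Set.Ici 0) fun x : ℝ ↦ x ^ β :=
    Real.concaveOn_rpow hβ0.le hβ1.le
  -- inner inequality: (c+u)^β - (c'+u)^β ≤ (c+u')^β - (c'+u')^β
  have hinner : (c' + u') ^ β + (c + u) ^ β ≤ (c' + u) ^ β + (c + u') ^ β :=
    concave_diff hconc (by positivity) (by linarith) (by linarith) (by ring)
  have hD0 : (0:ℝ) ≤ (c + u) ^ β - (c' + u) ^ β := by
    have := Real.rpow_le_rpow (by positivity : (0:ℝ) ≤ c' + u)
      (by linarith : c' + u ≤ c + u) hβ0.le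
    linarith
  have hD' : (c + u) ^ β - (c' + u) ^ β ≤ (c + u') ^ β - (c' + u') ^ β := by linarith
  -- v = b / u, v' = b / u'
  have hveq : v = b / u := by rw [hu]; field_simp
  have hv'eq : v' = b / u' := by rw [hu']; field_simp
  have hmul : (b / u) * ((c + u) ^ β - (c' + u) ^ β) ≤
      (b / u') * ((c + u') ^ β - (c' + u') ^ β) := by
    apply mul_le_mul (div_le_div_of_nonneg_left hb.le hu'0 huu) hD' hD0 (by positivity)
  calc v * (c + b / v) ^ β + v' * (c' + b / v') ^ β
      = v * (c' + b / v) ^ β + v' * (c + b / v') ^ β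
        + ((b / u) * ((c + u) ^ β - (c' + u) ^ β)
           - (b / u') * ((c + u') ^ β - (c' + u') ^ β)) := by
        rw [← hu, ← hu', ← hveq, ← hv'eq]; ring
    _ ≤ v * (c' + b / v) ^ β + v' * (c + b / v') ^ β := by linarith

/-- The identity permutation minimizes for submodular-type cost matrices. -/
lemma perm_min {n : ℕ} (F : Fin n → Fin n → ℝ)
    (hex : ∀ i j k l : Fin n, i ≤ j → k ≤ l → F i k + F j l ≤ F i l + F j k) :
    ∀ (N : ℕ) (π : Equiv.Perm (Fin n)), π.support.card ≤ N →
      ∑ i, F i i ≤ ∑ i, F i (π i) := by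
  intro N
  induction N with
  | zero =>
    intro π hπ
    have : π = 1 := by
      rw [← Equiv.Perm.support_eq_empty_iff]
      exact Finset.card_eq_zero.mp (Nat.le_zero.mp hπ)
    simp [this]
  | succ N ih =>
    intro π hπ
    rcases eq_or_ne π 1 with rfl | hne
    · simp
    have hsupp : π.support.Nonempty := by
      rw [Finset.nonempty_iff_ne_empty, Ne, Equiv.Perm.support_eq_empty_iff]
      exact hne
    set a := π.support.max' hsupp with ha
    have haS : a ∈ π.support := π.support.max'_mem hsupp
    have hπa : π a ≠ a := Equiv.Perm.mem_support.mp haS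
    set j := π⁻¹ a with hj
    have hπj : π j = a := Equiv.apply_symm_apply π a
    have hja : j ≠ a := by
      intro h; apply hπa; rw [← h] at hπj ⊢; exact hπj
    have hjS : j ∈ π.support := by
      rw [Equiv.Perm.mem_support, hπj]; exact fun h => hja h.symm
    have hjle : j ≤ a := π.support.le_max' j hjS
    have hπaS : π a ∈ π.support := Equiv.Perm.apply_mem_support.mpr haS
    have hπale : π a ≤ a := π.support.le_max' (π a) hπaS
    set π' := π * Equiv.swap j a with hπ'
    have hπ'a : π' a = a := by
      simp [hπ', Equiv.swap_apply_right, hπj]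
    have hπ'j : π' j = π a := by
      simp [hπ', Equiv.swap_apply_left]
    have hπ'other : ∀ b : Fin n, b ≠ j → b ≠ a → π' b = π b := by
      intro b hbj hba
      simp [hπ', Equiv.swap_apply_of_ne_of_ne hbj hba]
    have hsub : π'.support ⊆ π.support.erase a := by
      intro b hb
      rw [Equiv.Perm.mem_support] at hb
      have hba : b ≠ a := by intro h; subst h; exact hb hπ'a
      rw [Finset.mem_erase]
      refine ⟨hba, ?_⟩
      rcases eq_or_ne b j with rfl | hbj
      · exact hjS
      · rw [Equiv.Perm.mem_support, ← hπ'other b hbj hba]; exact hb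
    have hcard : π'.support.card ≤ N := by
      have h1 : π'.support.card ≤ (π.support.erase a).card := Finset.card_le_card hsub
      have h2 : (π.support.erase a).card = π.support.card - 1 :=
        Finset.card_erase_of_mem haS
      have h3 : 1 ≤ π.support.card := Finset.card_pos.mpr ⟨a, haS⟩
      omega
    have step : ∑ i, F i (π' i) ≤ ∑ i, F i (π i) := by
      have hpair : ({j, a} : Finset (Fin n)) ⊆ univ := Finset.subset_univ _
      rw [← Finset.sum_compl_add_sum ({j, a} : Finset (Fin n)) (fun i => F i (π' i)),
          ← Finset.sum_compl_add_sum ({j, a} : Finset (Fin n)) (fun i => F i (π i))]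
      have hcompl : ∑ i ∈ ({j, a} : Finset (Fin n))ᶜ, F i (π' i)
          = ∑ i ∈ ({j, a} : Finset (Fin n))ᶜ, F i (π i) := by
        apply Finset.sum_congr rfl
        intro b hb
        rw [Finset.mem_compl, Finset.mem_insert, Finset.mem_singleton] at hb
        push_neg at hb
        rw [hπ'other b hb.1 hb.2]
      rw [hcompl]
      refine add_le_add le_rfl ?_
      rw [Finset.sum_pair hja, Finset.sum_pair hja, hπ'a, hπ'j, hπj]
      exact hex j a (π a) a hjle hπale
    calc ∑ i, F i i ≤ ∑ i, F i (π' i) := ih π' hcard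
      _ ≤ ∑ i, F i (π i) := step

/-- Among all orderings of the sizes, `G(π)` is minimized when the rigid jobs are ordered by
non-decreasing number of required processors. -/
theorem rigid_sequence_optimal
    (α W : ℝ) (hα : 1 < α) (hW : 0 < W) (m n : ℕ) (hm : 0 < m) (hn : 0 < n)
    (s : Fin n → ℕ) (hpos : ∀ i, 0 < s i) (hmono : Monotone s)
    (π : Equiv.Perm (Fin n)) :
    ∑ i : Fin n, W * (s i : ℝ) *
        ((n : ℝ) - ((i : ℕ) + 1) + 0.5 + 0.5 * (m : ℝ) / (s i : ℝ)) ^ ((α - 1) / α) ≤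
      ∑ i : Fin n, W * (s (π i) : ℝ) *
        ((n : ℝ) - ((i : ℕ) + 1) + 0.5 + 0.5 * (m : ℝ) / (s (π i) : ℝ)) ^ ((α - 1) / α) := by
  set F : Fin n → Fin n → ℝ := fun i k =>
    W * (s k : ℝ) * ((n : ℝ) - ((i : ℕ) + 1) + 0.5 + 0.5 * (m : ℝ) / (s k : ℝ)) ^ ((α - 1) / α)
    with hF
  have hex : ∀ i j k l : Fin n, i ≤ j → k ≤ l → F i k + F j l ≤ F i l + F j k := by
    intro i j k l hij hkl
    have hβ0 : 0 < (α - 1) / α := by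
      apply div_pos <;> linarith
    have hβ1 : (α - 1) / α < 1 := by
      rw [div_lt_one (by linarith)]; linarith
    have hb : (0:ℝ) < 0.5 * (m : ℝ) := by
      have : (1:ℝ) ≤ (m:ℝ) := by exact_mod_cast hm
      norm_num; linarith
    have hci : ((j:ℕ):ℝ) + 1 ≤ n := by
      have := j.isLt
      exact_mod_cast this
    have hc' : (0:ℝ) < (n : ℝ) - ((j : ℕ) + 1) + 0.5 := by
      norm_num; linarith
    have hcc : (n : ℝ) - ((j : ℕ) + 1) + 0.5 ≤ (n : ℝ) - ((i : ℕ) + 1) + 0.5 := by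
      have : ((i:ℕ):ℝ) ≤ ((j:ℕ):ℝ) := by exact_mod_cast hij
      linarith
    have hv : (0:ℝ) < (s k : ℝ) := by exact_mod_cast hpos k
    have hvv : ((s k : ℕ):ℝ) ≤ (s l : ℝ) := by exact_mod_cast hmono hkl
    have key := exchange hβ0 hβ1 hb hc' hcc hv hvv
    have := mul_le_mul_of_nonneg_left key hW.le
    simp only [hF]
    calc W * (s k : ℝ) * ((n : ℝ) - ((i : ℕ) + 1) + 0.5 + 0.5 * (m : ℝ) / (s k : ℝ)) ^ ((α - 1) / α)
          + W * (s l : ℝ) * ((n : ℝ) - ((j : ℕ) + 1) + 0.5 + 0.5 * (m : ℝ) / (s l : ℝ)) ^ ((α - 1) / α)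
        = W * ((s k : ℝ) * (((n : ℝ) - ((i : ℕ) + 1) + 0.5) + 0.5 * (m : ℝ) / (s k : ℝ)) ^ ((α - 1) / α)
            + (s l : ℝ) * (((n : ℝ) - ((j : ℕ) + 1) + 0.5) + 0.5 * (m : ℝ) / (s l : ℝ)) ^ ((α - 1) / α)) := by
          ring_nf
      _ ≤ W * ((s k : ℝ) * (((n : ℝ) - ((j : ℕ) + 1) + 0.5) + 0.5 * (m : ℝ) / (s k : ℝ)) ^ ((α - 1) / α)
            + (s l : ℝ) * (((n : ℝ) - ((i : ℕ) + 1) + 0.5) + 0.5 * (m : ℝ) / (s l : ℝ)) ^ ((α - 1) / α)) := this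
      _ = W * (s l : ℝ) * ((n : ℝ) - ((i : ℕ) + 1) + 0.5 + 0.5 * (m : ℝ) / (s l : ℝ)) ^ ((α - 1) / α)
          + W * (s k : ℝ) * ((n : ℝ) - ((j : ℕ) + 1) + 0.5 + 0.5 * (m : ℝ) / (s k : ℝ)) ^ ((α - 1) / α) := by
          ring_nf
  exact perm_min F hex π.support.card π le_rfl
end

section
/- Let α > 1 and E > 0 be reals, m and n positive integers, and for j = 1, …, n let V_j > 0 be reals and δ_j positive integers. For all positive reals p_1, …, p_n satisfying ∑_{j=1}^n V_j^α · p_j^{1−α} ≤ E, one has (1/m)·∑_{j=1}^n ∑_{i=1}^{j} p_i + (1/2)·∑_{j=1}^n p_j/δ_j − (1/(2m))·∑_{j=1}^n p_j ≥ (E^{1/(1−α)}/m) · ( ∑_{j=1}^n V_j · ( n−j+0.5 + 0.5·m/δ_j )^{(α−1)/α} )^{α/(α−1)}. -/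
open Finset

/-- Lower bound for moldable jobs: any positive durations satisfying the energy budget make
the total-completion-time lower-bound expression (8) at least the closed-form bound `LB`. -/
theorem moldable_lower_bound_LB
    (α E : ℝ) (hα : 1 < α) (hE : 0 < E) (m n : ℕ) (hm : 0 < m) (hn : 0 < n)
    (V : ℕ → ℝ) (δ : ℕ → ℕ)
    (hV : ∀ j ∈ Icc 1 n, 0 < V j) (hδ : ∀ j ∈ Icc 1 n, 0 < δ j)
    (p : ℕ → ℝ) (hp : ∀ j ∈ Icc 1 n, 0 < p j)
    (henergy : ∑ j ∈ Icc 1 n, V j ^ α * p j ^ (1 - α) ≤ E) :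
    (1 / (m : ℝ)) * ∑ j ∈ Icc 1 n, ∑ i ∈ Icc 1 j, p i
        + (1 / 2) * ∑ j ∈ Icc 1 n, p j / (δ j : ℝ)
        - (1 / (2 * (m : ℝ))) * ∑ j ∈ Icc 1 n, p j ≥
      (E ^ (1 / (1 - α)) / (m : ℝ)) *
        (∑ j ∈ Icc 1 n, V j *
          ((n : ℝ) - j + 0.5 + 0.5 * (m : ℝ) / (δ j : ℝ)) ^ ((α - 1) / α))
          ^ (α / (α - 1)) := by
  have hα0 : (0:ℝ) < α := lt_trans one_pos hα
  have hα1 : (0:ℝ) < α - 1 := by linarith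
  set c : ℕ → ℝ := fun j => (n : ℝ) - j + 0.5 + 0.5 * (m : ℝ) / (δ j : ℝ) with hc
  have hcpos : ∀ j ∈ Icc 1 n, 0 < c j := by
    intro j hj
    rw [mem_Icc] at hj
    have h1 : (j : ℝ) ≤ (n : ℝ) := by exact_mod_cast hj.2
    have h2 : 0 < 0.5 * (m : ℝ) / (δ j : ℝ) := by
      have := hδ j (mem_Icc.mpr hj)
      positivity
    simp only [hc]
    linarith
  set S : ℝ := ∑ j ∈ Icc 1 n, c j * p j with hS
  set A : ℝ := ∑ j ∈ Icc 1 n, V j * c j ^ ((α - 1) / α) with hA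
  have hSpos : 0 < S := by
    apply Finset.sum_pos (fun j hj => mul_pos (hcpos j hj) (hp j hj))
    exact ⟨1, mem_Icc.mpr ⟨le_refl 1, hn⟩⟩
  have hAnn : 0 ≤ A := by
    apply Finset.sum_nonneg
    intro j hj
    exact mul_nonneg (hV j hj).le (Real.rpow_nonneg (hcpos j hj).le _)
  -- Hölder step
  have hpq : Real.HolderConjugate α (α / (α - 1)) :=
    Real.HolderConjugate.conjExponent hα
  have hhold : A ≤ E ^ (1/α) * S ^ ((α-1)/α) := by
    have key := Real.inner_le_Lp_mul_Lq_of_nonneg (Icc 1 n)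
        (f := fun j => V j * p j ^ ((1-α)/α)) (g := fun j => (c j * p j) ^ ((α-1)/α)) hpq
        (fun j hj => mul_nonneg (hV j hj).le (Real.rpow_nonneg (hp j hj).le _))
        (fun j hj => Real.rpow_nonneg (mul_nonneg (hcpos j hj).le (hp j hj).le) _)
    have e1 : ∑ j ∈ Icc 1 n, (V j * p j ^ ((1-α)/α)) * (c j * p j) ^ ((α-1)/α) = A := by
      apply Finset.sum_congr rfl
      intro j hj
      rw [Real.mul_rpow (hcpos j hj).le (hp j hj).le]
      have hpp : p j ^ ((1-α)/α) * p j ^ ((α-1)/α) = 1 := by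
        rw [← Real.rpow_add (hp j hj)]
        have h0 : (1-α)/α + (α-1)/α = 0 := by field_simp; ring
        rw [h0, Real.rpow_zero]
      calc V j * p j ^ ((1-α)/α) * (c j ^ ((α-1)/α) * p j ^ ((α-1)/α))
          = V j * c j ^ ((α-1)/α) * (p j ^ ((1-α)/α) * p j ^ ((α-1)/α)) := by ring
        _ = V j * c j ^ ((α-1)/α) := by rw [hpp, mul_one]
    have e2 : ∑ j ∈ Icc 1 n, (V j * p j ^ ((1-α)/α)) ^ α = ∑ j ∈ Icc 1 n, V j ^ α * p j ^ (1-α) := by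
      apply Finset.sum_congr rfl
      intro j hj
      rw [Real.mul_rpow (hV j hj).le (Real.rpow_nonneg (hp j hj).le _),
        ← Real.rpow_mul (hp j hj).le]
      have h0 : (1-α)/α * α = 1-α := by field_simp
      rw [h0]
    have e3 : ∑ j ∈ Icc 1 n, ((c j * p j) ^ ((α-1)/α)) ^ (α/(α-1)) = S := by
      apply Finset.sum_congr rfl
      intro j hj
      rw [← Real.rpow_mul (mul_nonneg (hcpos j hj).le (hp j hj).le)]
      have h0 : (α-1)/α * (α/(α-1)) = 1 := by field_simp
      rw [h0, Real.rpow_one, mul_comm]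
    have e4 : 1 / (α/(α-1)) = (α-1)/α := by field_simp
    rw [e1, e2, e3, e4] at key
    refine key.trans (mul_le_mul_of_nonneg_right ?_ (Real.rpow_nonneg hSpos.le _))
    exact Real.rpow_le_rpow (Finset.sum_nonneg fun j hj =>
      mul_nonneg (Real.rpow_nonneg (hV j hj).le _) (Real.rpow_nonneg (hp j hj).le _)) henergy
      (by positivity)
  -- raise to power α/(α-1)
  have hmain : E ^ (1/(1-α)) * A ^ (α/(α-1)) ≤ S := by
    have h1 : A ^ (α/(α-1)) ≤ (E ^ (1/α) * S ^ ((α-1)/α)) ^ (α/(α-1)) :=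
      Real.rpow_le_rpow hAnn hhold (by positivity)
    have h2 : (E ^ (1/α) * S ^ ((α-1)/α)) ^ (α/(α-1)) = E ^ (1/(α-1)) * S := by
      rw [Real.mul_rpow (Real.rpow_nonneg hE.le _) (Real.rpow_nonneg hSpos.le _),
        ← Real.rpow_mul hE.le, ← Real.rpow_mul hSpos.le]
      have h0 : (α-1)/α * (α/(α-1)) = 1 := by field_simp
      have h0' : 1/α * (α/(α-1)) = 1/(α-1) := by field_simp
      rw [h0, h0', Real.rpow_one]
    rw [h2] at h1
    have h3 : E ^ (1/(1-α)) * E ^ (1/(α-1)) = 1 := by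
      rw [← Real.rpow_add hE]
      have : 1/(1-α) + 1/(α-1) = 0 := by
        rw [one_div, one_div, ← neg_sub α 1, inv_neg]; ring
      rw [this, Real.rpow_zero]
    calc E ^ (1/(1-α)) * A ^ (α/(α-1)) ≤ E ^ (1/(1-α)) * (E ^ (1/(α-1)) * S) :=
          mul_le_mul_of_nonneg_left h1 (Real.rpow_nonneg hE.le _)
      _ = (E ^ (1/(1-α)) * E ^ (1/(α-1))) * S := by ring
      _ = S := by rw [h3, one_mul]
  -- rewrite LHS
  have hdouble : ∑ j ∈ Icc 1 n, ∑ i ∈ Icc 1 j, p i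
      = ∑ i ∈ Icc 1 n, ((n : ℝ) - i + 1) * p i := by
    rw [Finset.sum_comm' (t' := Icc 1 n) (s' := fun i => Icc i n) (by
      intro x y
      simp only [mem_Icc]
      omega)]
    apply Finset.sum_congr rfl
    intro i hi
    rw [mem_Icc] at hi
    rw [Finset.sum_const, Nat.card_Icc, nsmul_eq_mul]
    congr 1
    have : (i:ℝ) ≤ n := by exact_mod_cast hi.2
    rw [Nat.cast_sub (by omega)]
    push_cast
    ring
  have hmR : (0:ℝ) < (m:ℝ) := by exact_mod_cast hm
  have hLHS : (1 / (m : ℝ)) * ∑ j ∈ Icc 1 n, ∑ i ∈ Icc 1 j, p i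
        + (1 / 2) * ∑ j ∈ Icc 1 n, p j / (δ j : ℝ)
        - (1 / (2 * (m : ℝ))) * ∑ j ∈ Icc 1 n, p j = (1/(m:ℝ)) * S := by
    rw [hdouble, hS, Finset.mul_sum, Finset.mul_sum, Finset.mul_sum, Finset.mul_sum,
      ← Finset.sum_add_distrib, ← Finset.sum_sub_distrib]
    apply Finset.sum_congr rfl
    intro j hj
    have hδj : ((δ j : ℝ)) ≠ 0 := by
      have := hδ j hj; positivity
    simp only [hc]
    field_simp
    ring
  rw [ge_iff_le, hLHS, div_mul_eq_mul_div, div_le_iff₀ hmR]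
  calc E ^ (1/(1-α)) * A ^ (α/(α-1)) ≤ S := hmain
    _ = 1/(m:ℝ) * S * m := by field_simp
end

section
/- Let α > 1 be real, V > 0 real, m and n positive integers, and δ_1 ≤ δ_2 ≤ … ≤ δ_n positive integers. For every permutation π of {1, …, n}: ∑_{j=1}^n V·( n−j+0.5 + 0.5·m/δ_j )^{(α−1)/α} ≤ ∑_{j=1}^n V·( n−j+0.5 + 0.5·m/δ_{π(j)} )^{(α−1)/α}; that is, when all processing volumes are identical, the sum ∑_{j=1}^n V_{π_j}·( n−j+0.5 + 0.5·m/δ_{π_j} )^{(α−1)/α} over orderings of the jobs is minimized by ordering the jobs by non-decreasing maximum processor numbers δ_j. -/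
open Finset

/-- Two-point exchange inequality for a concave function. -/
lemma concave_exchange {h : ℝ → ℝ} (hc : ConcaveOn ℝ (Set.Ici 0) h)
    {x y z w : ℝ} (hx : 0 ≤ x) (hxy : x ≤ y) (hyw : y ≤ w) (hxz : x ≤ z) (hzw : z ≤ w)
    (hsum : x + w = y + z) : h x + h w ≤ h y + h z := by
  rcases eq_or_lt_of_le (hxy.trans hyw) with heq | hlt
  · have hy : y = x := le_antisymm (by linarith) hxy
    have hz : z = x := by linarith
    rw [← heq, hy, hz]
  · set t : ℝ := (w - y) / (w - x) with ht
    have hwx : 0 < w - x := by linarith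
    have ht0 : 0 ≤ t := div_nonneg (by linarith) hwx.le
    have ht1 : t ≤ 1 := (div_le_one hwx).2 (by linarith)
    have hxmem : x ∈ Set.Ici (0:ℝ) := hx
    have hwmem : w ∈ Set.Ici (0:ℝ) := le_trans hx (by linarith)
    have hy' : t • x + (1 - t) • w = y := by
      rw [ht]
      simp only [smul_eq_mul]
      rw [div_mul_eq_mul_div, one_sub_div hwx.ne', div_mul_eq_mul_div, ← add_div,
        div_eq_iff hwx.ne']
      ring
    have hz' : (1 - t) • x + t • w = z := by
      have : (1 - t) * x + t * w = x + (w - y) := by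
        rw [ht]; field_simp; ring
      simpa [smul_eq_mul, this] using by linarith
    have h1 := hc.2 hxmem hwmem ht0 ((by linarith : (0:ℝ) ≤ 1 - t)) (show t + (1 - t) = 1 by ring)
    have h2 := hc.2 hxmem hwmem ((by linarith : (0:ℝ) ≤ 1 - t)) ht0 (show (1 - t) + t = 1 by ring)
    rw [hy'] at h1
    rw [hz'] at h2
    simp only [smul_eq_mul] at h1 h2
    nlinarith [h1, h2]

/-- Rearrangement-type inequality for a concave function of sums of two antitone families. -/
lemma concave_rearrangement {n : ℕ} (h : ℝ → ℝ) (hc : ConcaveOn ℝ (Set.Ici 0) h)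
    (a b : Fin n → ℝ) (ha0 : ∀ i, 0 ≤ a i) (hb0 : ∀ i, 0 ≤ b i)
    (ha : Antitone a) (hb : Antitone b) (σ : Equiv.Perm (Fin n)) :
    ∑ i, h (a i + b i) ≤ ∑ i, h (a i + b (σ i)) := by
  classical
  suffices H : ∀ k (σ : Equiv.Perm (Fin n)),
      (univ.filter fun i => σ i ≠ i).card ≤ k →
      ∑ i, h (a i + b i) ≤ ∑ i, h (a i + b (σ i)) from H _ σ le_rfl
  intro k
  induction k with
  | zero =>
    intro σ hcard
    have : ∀ i, σ i = i := by
      intro i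
      by_contra hne
      have : i ∈ univ.filter fun i => σ i ≠ i := by simp [hne]
      have := Finset.card_pos.2 ⟨i, this⟩
      omega
    simp [this]
  | succ k ih =>
    intro σ hcard
    by_cases hfix : ∀ i, σ i = i
    · simp [hfix]
    · push_neg at hfix
      set s : Finset (Fin n) := univ.filter fun i => σ i ≠ i with hs
      have hsne : s.Nonempty := by
        obtain ⟨i, hi⟩ := hfix
        exact ⟨i, by simp [hs, hi]⟩
      set i0 := s.min' hsne with hi0def
      have hi0mem : i0 ∈ s := s.min'_mem hsne
      have hσi0 : σ i0 ≠ i0 := by simpa [hs] using hi0mem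
      have hσi0mem : σ i0 ∈ s := by
        simp only [hs, mem_filter, mem_univ, true_and]
        exact fun hcon => hσi0 (σ.injective hcon)
      have hi0lt : i0 < σ i0 := lt_of_le_of_ne (s.min'_le _ hσi0mem) (Ne.symm hσi0)
      set j := σ.symm i0 with hjdef
      have hσj : σ j = i0 := σ.apply_symm_apply i0
      have hji0 : j ≠ i0 := by
        intro hcon
        rw [hcon] at hσj
        exact hσi0 hσj
      have hjmem : j ∈ s := by
        simp only [hs, mem_filter, mem_univ, true_and, hσj]
        exact Ne.symm hji0
      have hi0j : i0 < j := lt_of_le_of_ne (s.min'_le _ hjmem) (Ne.symm hji0)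
      set τ : Equiv.Perm (Fin n) := σ * Equiv.swap i0 j with hτdef
      have hτi0 : τ i0 = i0 := by simp [hτdef, Equiv.swap_apply_left, hσj]
      have hτj : τ j = σ i0 := by simp [hτdef, Equiv.swap_apply_right]
      have hτother : ∀ x, x ≠ i0 → x ≠ j → τ x = σ x := by
        intro x h1 h2
        simp [hτdef, Equiv.swap_apply_of_ne_of_ne h1 h2]
      -- support of τ is contained in s.erase i0
      have hτsub : (univ.filter fun i => τ i ≠ i) ⊆ s.erase i0 := by
        intro x hx
        simp only [mem_filter, mem_univ, true_and] at hx
        rw [mem_erase]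
        constructor
        · intro hcon; rw [hcon, hτi0] at hx; exact hx rfl
        · rcases eq_or_ne x j with rfl | hxj
          · exact hjmem
          · rcases eq_or_ne x i0 with rfl | hxi0
            · rw [hτi0] at hx; exact absurd rfl hx
            · rw [hτother x hxi0 hxj] at hx
              simp [hs, hx]
      have hcard' : (univ.filter fun i => τ i ≠ i).card ≤ k := by
        have h1 := Finset.card_le_card hτsub
        have h2 : (s.erase i0).card = s.card - 1 := Finset.card_erase_of_mem hi0mem
        have h3 : 1 ≤ s.card := Finset.card_pos.2 hsne
        omega
      have hih := ih τ hcard'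
      refine hih.trans ?_
      -- Now compare τ and σ sums: they differ only at i0 and j.
      have split : ∀ g : Fin n → ℝ,
          ∑ i, g i = g i0 + (g j + ∑ i ∈ (univ.erase i0).erase j, g i) := by
        intro g
        rw [Finset.add_sum_erase _ g (show j ∈ univ.erase i0 by
          simp [Ne.symm, hji0]), Finset.add_sum_erase _ g (mem_univ i0)]
      rw [split (fun i => h (a i + b (τ i))), split (fun i => h (a i + b (σ i)))]
      have hrest : ∑ i ∈ (univ.erase i0).erase j, h (a i + b (τ i))
          = ∑ i ∈ (univ.erase i0).erase j, h (a i + b (σ i)) := by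
        refine Finset.sum_congr rfl fun x hx => ?_
        simp only [mem_erase] at hx
        rw [hτother x hx.2.1 hx.1]
      rw [hrest, hτi0, hτj, hσj]
      have key : h (a i0 + b i0) + h (a j + b (σ i0)) ≤
          h (a i0 + b (σ i0)) + h (a j + b i0) := by
        have hab : a j ≤ a i0 := ha hi0j.le
        have hbb : b (σ i0) ≤ b i0 := hb hi0lt.le
        have := concave_exchange hc (x := a j + b (σ i0)) (y := a j + b i0)
          (z := a i0 + b (σ i0)) (w := a i0 + b i0)
          (add_nonneg (ha0 j) (hb0 _))
          (by linarith) (by linarith) (by linarith) (by linarith) (by ring)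
        linarith
      linarith

/-- For moldable jobs with identical volumes, the sum defining the lower bound `LB` is
minimized by ordering the jobs by non-decreasing maximum processor numbers `δ_j`. -/
theorem moldable_sequence_optimal
    (α V : ℝ) (hα : 1 < α) (hV : 0 < V) (m n : ℕ) (hm : 0 < m) (hn : 0 < n)
    (δ : Fin n → ℕ) (hpos : ∀ j, 0 < δ j) (hmono : Monotone δ)
    (π : Equiv.Perm (Fin n)) :
    ∑ j : Fin n, V *
        ((n : ℝ) - ((j : ℕ) + 1) + 0.5 + 0.5 * (m : ℝ) / (δ j : ℝ)) ^ ((α - 1) / α) ≤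
      ∑ j : Fin n, V *
        ((n : ℝ) - ((j : ℕ) + 1) + 0.5 + 0.5 * (m : ℝ) / (δ (π j) : ℝ)) ^ ((α - 1) / α) := by
  have hα0 : (0:ℝ) < α := by linarith
  have hc0 : (0:ℝ) ≤ (α - 1) / α := div_nonneg (by linarith) hα0.le
  have hc1 : (α - 1) / α ≤ 1 := by
    rw [div_le_one hα0]; linarith
  have hconc : ConcaveOn ℝ (Set.Ici 0) (fun x : ℝ => V * x ^ ((α - 1) / α)) := by
    have := (Real.concaveOn_rpow hc0 hc1).smul hV.le
    simpa [smul_eq_mul] using this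
  have ha0 : ∀ i : Fin n, 0 ≤ (n : ℝ) - ((i : ℕ) + 1) + 0.5 := by
    intro i
    have h1 : ((i : ℕ) : ℝ) + 1 ≤ (n : ℝ) := by exact_mod_cast i.isLt
    norm_num; linarith
  have hb0 : ∀ i : Fin n, 0 ≤ 0.5 * (m : ℝ) / (δ i : ℝ) := by
    intro i; exact div_nonneg (by positivity) (Nat.cast_nonneg _)
  have ha : Antitone (fun i : Fin n => (n : ℝ) - ((i : ℕ) + 1) + 0.5) := by
    intro i j hij
    have : ((i : ℕ) : ℝ) ≤ ((j : ℕ) : ℝ) := by exact_mod_cast hij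
    simp only; linarith
  have hb : Antitone (fun i : Fin n => 0.5 * (m : ℝ) / (δ i : ℝ)) := by
    intro i j hij
    have h1 : (0 : ℝ) < (δ i : ℝ) := by exact_mod_cast hpos i
    have h2 : ((δ i : ℕ) : ℝ) ≤ ((δ j : ℕ) : ℝ) := by exact_mod_cast hmono hij
    exact div_le_div_of_nonneg_left (by positivity) h1 h2
  exact concave_rearrangement _ hconc _ _ ha0 hb0 ha hb π
end

section
/- For every real α > 1 and all positive reals p_1, p_2, p_3 satisfying p_1^{1−α} + p_2^{1−α} + p_3^{1−α} = 3, one has 3·p_1 + 2·p_2 + p_3 ≥ ( (3^{(α−1)/α} + 2^{(α−1)/α} + 1)^α / 3 )^{1/(α−1)}. -/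
private lemma young_aux {α w p u : ℝ} (hα : 1 < α) (hw : 0 < w) (hp : 0 < p) (hu : 0 < u) :
    w ^ ((α - 1) / α) ≤ (α - 1) / α * (w * p * u) + 1 / α * (p ^ (1 - α) * u ^ (1 - α)) := by
  have hα0 : (0 : ℝ) < α := lt_trans one_pos hα
  have hα1 : (0 : ℝ) < α - 1 := by linarith
  have hαne : α ≠ 0 := ne_of_gt hα0
  have hα1ne : α - 1 ≠ 0 := ne_of_gt hα1
  have hpq : Real.HolderConjugate (α / (α - 1)) α := by
    rw [Real.holderConjugate_iff]; constructor
    · rw [lt_div_iff₀ hα1]; linarith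
    · rw [inv_div, ← one_div, ← add_div, sub_add_cancel, div_self hαne]
  have hwpu : (0 : ℝ) < w * p * u := by positivity
  have hpu : (0 : ℝ) < p * u := by positivity
  have h := Real.young_inequality_of_nonneg
    (Real.rpow_nonneg hwpu.le ((α - 1) / α))
    (Real.rpow_nonneg hpu.le ((1 - α) / α)) hpq
  have hab : (w * p * u) ^ ((α - 1) / α) * (p * u) ^ ((1 - α) / α) = w ^ ((α - 1) / α) := by
    have h0 : w * p * u = w * (p * u) := by ring
    rw [h0, Real.mul_rpow hw.le hpu.le, mul_assoc, ← Real.rpow_add hpu]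
    have : (α - 1) / α + (1 - α) / α = 0 := by field_simp; ring
    rw [this, Real.rpow_zero, mul_one]
  have ha : ((w * p * u) ^ ((α - 1) / α)) ^ (α / (α - 1)) = w * p * u := by
    rw [← Real.rpow_mul hwpu.le]
    have : (α - 1) / α * (α / (α - 1)) = 1 := by field_simp
    rw [this, Real.rpow_one]
  have hb : ((p * u) ^ ((1 - α) / α)) ^ α = p ^ (1 - α) * u ^ (1 - α) := by
    rw [← Real.rpow_mul hpu.le]
    have : (1 - α) / α * α = 1 - α := by field_simp
    rw [this, Real.mul_rpow hp.le hu.le]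
  rw [hab, ha, hb] at h
  calc w ^ ((α - 1) / α)
      ≤ (w * p * u) / (α / (α - 1)) + (p ^ (1 - α) * u ^ (1 - α)) / α := h
    _ = (α - 1) / α * (w * p * u) + 1 / α * (p ^ (1 - α) * u ^ (1 - α)) := by
        field_simp

/-- Lower bound of the auxiliary convex program in the NP-hardness proof of Theorem 4:
for `α > 1` and positive `p₁, p₂, p₃` with `p₁^(1-α) + p₂^(1-α) + p₃^(1-α) = 3`, one has
`3·p₁ + 2·p₂ + p₃ ≥ ((3^((α-1)/α) + 2^((α-1)/α) + 1)^α / 3)^(1/(α-1))`. -/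
theorem convex_program_lower_bound_dedicated
    (α : ℝ) (hα : 1 < α) (p₁ p₂ p₃ : ℝ)
    (h₁ : 0 < p₁) (h₂ : 0 < p₂) (h₃ : 0 < p₃)
    (henergy : p₁ ^ (1 - α) + p₂ ^ (1 - α) + p₃ ^ (1 - α) = 3) :
    3 * p₁ + 2 * p₂ + p₃ ≥
      (((3 : ℝ) ^ ((α - 1) / α) + (2 : ℝ) ^ ((α - 1) / α) + 1) ^ α / 3) ^ (1 / (α - 1)) := by
  have hα0 : (0 : ℝ) < α := lt_trans one_pos hα
  have hα1 : (0 : ℝ) < α - 1 := by linarith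
  have hαne : α ≠ 0 := ne_of_gt hα0
  have hα1ne : α - 1 ≠ 0 := ne_of_gt hα1
  set S : ℝ := (3 : ℝ) ^ ((α - 1) / α) + (2 : ℝ) ^ ((α - 1) / α) + 1 with hS_def
  have hS : 0 < S := by positivity
  set u : ℝ := (3 / S) ^ (1 / (α - 1)) with hu_def
  have hu : 0 < u := by positivity
  set T : ℝ := 3 * p₁ + 2 * p₂ + p₃ with hT_def
  have hT : 0 < T := by rw [hT_def]; positivity
  -- Young's inequality termwise
  have e₁ := young_aux hα (show (0:ℝ) < 3 by norm_num) h₁ hu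
  have e₂ := young_aux hα (show (0:ℝ) < 2 by norm_num) h₂ hu
  have e₃ := young_aux hα one_pos h₃ hu
  rw [Real.one_rpow] at e₃
  have hsum : S ≤ (α - 1) / α * (T * u)
      + 1 / α * ((p₁ ^ (1 - α) + p₂ ^ (1 - α) + p₃ ^ (1 - α)) * u ^ (1 - α)) := by
    calc S ≤ ((α - 1) / α * (3 * p₁ * u) + 1 / α * (p₁ ^ (1 - α) * u ^ (1 - α)))
            + ((α - 1) / α * (2 * p₂ * u) + 1 / α * (p₂ ^ (1 - α) * u ^ (1 - α)))
            + ((α - 1) / α * (1 * p₃ * u) + 1 / α * (p₃ ^ (1 - α) * u ^ (1 - α))) :=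
          add_le_add (add_le_add e₁ e₂) e₃
      _ = (α - 1) / α * (T * u)
            + 1 / α * ((p₁ ^ (1 - α) + p₂ ^ (1 - α) + p₃ ^ (1 - α)) * u ^ (1 - α)) := by
          rw [hT_def]; ring
  rw [henergy] at hsum
  -- compute u ^ (1 - α) = S / 3
  have huS : u ^ (1 - α) = S / 3 := by
    rw [hu_def, ← Real.rpow_mul (by positivity)]
    have : 1 / (α - 1) * (1 - α) = -1 := by field_simp; ring
    rw [this, Real.rpow_neg_one, inv_div]
  rw [huS] at hsum
  -- deduce S ≤ T * u
  have hid : S * ((α - 1) / α) + S * (1 / α) = S := by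
    have : (α - 1) / α + 1 / α = 1 := by field_simp; ring
    calc S * ((α - 1) / α) + S * (1 / α) = S * ((α - 1) / α + 1 / α) := by ring
      _ = S := by rw [this, mul_one]
  have htriv : 1 / α * (3 * (S / 3)) = S * (1 / α) := by ring
  have h2 : (0 : ℝ) < (α - 1) / α := by positivity
  have h3 : (α - 1) / α * S ≤ (α - 1) / α * (T * u) := by linarith
  have hSTu : S ≤ T * u := le_of_mul_le_mul_left h3 h2
  -- conclude
  have hv : (0 : ℝ) < (S / 3) ^ (1 / (α - 1)) := by positivity
  have huinv : (S / 3 : ℝ) ^ (1 / (α - 1)) * u = 1 := by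
    rw [hu_def, ← Real.mul_rpow (by positivity) (by positivity)]
    have : S / 3 * (3 / S) = 1 := by field_simp
    rw [this, Real.one_rpow]
  have hgoal : (S ^ α / 3) ^ (1 / (α - 1)) = S * (S / 3) ^ (1 / (α - 1)) := by
    rw [Real.div_rpow (by positivity) (by norm_num), ← Real.rpow_mul hS.le]
    have hexp : α * (1 / (α - 1)) = 1 + 1 / (α - 1) := by field_simp; ring
    rw [hexp, Real.rpow_add hS, Real.rpow_one, Real.div_rpow hS.le (by norm_num)]
    ring
  rw [ge_iff_le, hgoal]
  have key := mul_le_mul_of_nonneg_right hSTu hv.le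
  have : T * u * ((S / 3) ^ (1 / (α - 1))) = T := by
    rw [mul_assoc, mul_comm u, huinv, mul_one]
  linarith
end

section
/- Let α > 1 be real, S = 3^{(α−1)/α} + 2^{(α−1)/α} + 1, and define p*_j = 3^{1/(1−α)} · (4−j)^{−1/α} · S^{1/(α−1)} for j = 1, 2, 3. Then (p*_1)^{1−α} + (p*_2)^{1−α} + (p*_3)^{1−α} = 3 and 3·p*_1 + 2·p*_2 + p*_3 = ( S^α / 3 )^{1/(α−1)}; that is, these durations are feasible and attain the minimum value of the convex program. -/
/-- The explicit durations `p*_j = 3^(1/(1-α)) · (4-j)^(-1/α) · S^(1/(α-1))` with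
`S = 3^((α-1)/α) + 2^((α-1)/α) + 1` are feasible for the convex program and attain its
minimum value `(S^α / 3)^(1/(α-1))`. -/
theorem convex_program_optimal_point_dedicated
    (α : ℝ) (hα : 1 < α) (S : ℝ)
    (hS : S = (3 : ℝ) ^ ((α - 1) / α) + (2 : ℝ) ^ ((α - 1) / α) + 1)
    (p : ℕ → ℝ)
    (hp : ∀ j ∈ Finset.Icc 1 3,
      p j = (3 : ℝ) ^ (1 / (1 - α)) * ((4 : ℝ) - j) ^ (-(1 / α)) * S ^ (1 / (α - 1))) :
    (p 1 ^ (1 - α) + p 2 ^ (1 - α) + p 3 ^ (1 - α) = 3) ∧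
      3 * p 1 + 2 * p 2 + p 3 = (S ^ α / 3) ^ (1 / (α - 1)) := by
  have hα0 : (0:ℝ) < α := lt_trans one_pos hα
  have hαne : α ≠ 0 := ne_of_gt hα0
  have hone : (1:ℝ) - α ≠ 0 := by nlinarith
  have hm1 : α - 1 ≠ 0 := by nlinarith
  have hS0 : (0:ℝ) < S := by rw [hS]; positivity
  have hp1 : p 1 = (3:ℝ) ^ (1 / (1 - α)) * (3:ℝ) ^ (-(1 / α)) * S ^ (1 / (α - 1)) := by
    have := hp 1 (by decide); norm_num at this; rw [this]; norm_num [one_div]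
  have hp2 : p 2 = (3:ℝ) ^ (1 / (1 - α)) * (2:ℝ) ^ (-(1 / α)) * S ^ (1 / (α - 1)) := by
    have := hp 2 (by decide); norm_num at this; rw [this]; norm_num [one_div]
  have hp3 : p 3 = (3:ℝ) ^ (1 / (1 - α)) * (1:ℝ) ^ (-(1 / α)) * S ^ (1 / (α - 1)) := by
    have := hp 3 (by decide); norm_num at this; rw [this]; norm_num [one_div]
  have key : ∀ c : ℝ, 0 < c →
      ((3:ℝ) ^ (1 / (1 - α)) * c ^ (-(1 / α)) * S ^ (1 / (α - 1))) ^ (1 - α)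
        = 3 * c ^ ((α - 1)/α) / S := by
    intro c hc
    rw [Real.mul_rpow (by positivity) (by positivity),
        Real.mul_rpow (by positivity) (by positivity),
        ← Real.rpow_mul (by norm_num : (0:ℝ) ≤ 3),
        ← Real.rpow_mul hc.le, ← Real.rpow_mul hS0.le]
    have e1 : 1 / (1 - α) * (1 - α) = 1 := by field_simp
    have e2 : -(1 / α) * (1 - α) = (α - 1) / α := by field_simp; ring
    have e3 : 1 / (α - 1) * (1 - α) = -1 := by field_simp; ring
    rw [e1, e2, e3, Real.rpow_one, Real.rpow_neg_one]
    field_simp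
  constructor
  · rw [hp1, hp2, hp3, key 3 (by norm_num), key 2 (by norm_num), key 1 (by norm_num)]
    rw [Real.one_rpow]
    field_simp
    rw [hS]
  · rw [hp1, hp2, hp3, Real.one_rpow]
    have h3 : (3:ℝ) * (3:ℝ) ^ (-(1 / α)) = (3:ℝ) ^ ((α-1)/α) := by
      rw [show (α-1)/α = 1 + -(1/α) by field_simp; ring,
          Real.rpow_add (by norm_num : (0:ℝ) < 3), Real.rpow_one]
    have h2 : (2:ℝ) * (2:ℝ) ^ (-(1 / α)) = (2:ℝ) ^ ((α-1)/α) := by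
      rw [show (α-1)/α = 1 + -(1/α) by field_simp; ring,
          Real.rpow_add (by norm_num : (0:ℝ) < 2), Real.rpow_one]
    have rhs : (S ^ α / 3) ^ (1 / (α - 1))
        = (3:ℝ) ^ (1 / (1 - α)) * S ^ (1 / (α - 1)) * S := by
      rw [Real.div_rpow (by positivity) (by norm_num), ← Real.rpow_mul hS0.le,
          show α * (1 / (α - 1)) = 1 / (α - 1) + 1 by field_simp; ring,
          Real.rpow_add hS0, Real.rpow_one, div_eq_mul_inv,
          ← Real.rpow_neg (by norm_num : (0:ℝ) ≤ 3),
          show -(1 / (α - 1)) = 1 / (1 - α) by field_simp; ring]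
      ring
    rw [rhs]
    calc 3 * ((3:ℝ) ^ (1 / (1 - α)) * (3:ℝ) ^ (-(1 / α)) * S ^ (1 / (α - 1)))
          + 2 * ((3:ℝ) ^ (1 / (1 - α)) * (2:ℝ) ^ (-(1 / α)) * S ^ (1 / (α - 1)))
          + (3:ℝ) ^ (1 / (1 - α)) * 1 * S ^ (1 / (α - 1))
        = (3:ℝ) ^ (1 / (1 - α)) * S ^ (1 / (α - 1))
            * ((3:ℝ) * (3:ℝ) ^ (-(1 / α)) + (2:ℝ) * (2:ℝ) ^ (-(1 / α)) + 1) := by ring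
      _ = (3:ℝ) ^ (1 / (1 - α)) * S ^ (1 / (α - 1)) * S := by rw [h3, h2, hS]
end

section
/- Let α > 1 and E > 0 be reals, n a positive integer, and for i = 1, …, n let W_i > 0 be reals and f_i positive integers. For all positive reals p_1, …, p_n satisfying the energy constraint ∑_{i=1}^n f_i · W_i^α · p_i^{1−α} ≤ E, one has ∑_{i=1}^n (n−i+1)·p_i ≥ E^{1/(1−α)} · ( ∑_{j=1}^n W_j · f_j^{1/α} · (n−j+1)^{(α−1)/α} )^{α/(α−1)}. -/
open Finset

/-- Lower bound for the single-processor subproblem of the two-processor dedicated problem: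
any positive durations satisfying the energy budget make the total completion time at least
the closed form `∑C_j¹(π)` of Section 5.2. -/
theorem dedicated_subproblem_lower_bound
    (α E : ℝ) (hα : 1 < α) (hE : 0 < E) (n : ℕ) (hn : 0 < n)
    (W : ℕ → ℝ) (f : ℕ → ℕ)
    (hW : ∀ i ∈ Icc 1 n, 0 < W i) (hf : ∀ i ∈ Icc 1 n, 0 < f i)
    (p : ℕ → ℝ) (hp : ∀ i ∈ Icc 1 n, 0 < p i)
    (henergy : ∑ i ∈ Icc 1 n, (f i : ℝ) * W i ^ α * p i ^ (1 - α) ≤ E) :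
    ∑ i ∈ Icc 1 n, ((n : ℝ) - i + 1) * p i ≥
      E ^ (1 / (1 - α)) *
        (∑ j ∈ Icc 1 n, W j * (f j : ℝ) ^ (1 / α) * ((n : ℝ) - j + 1) ^ ((α - 1) / α))
          ^ (α / (α - 1)) := by
  have hα0 : (0:ℝ) < α := lt_trans one_pos hα
  have hα1 : (0:ℝ) < α - 1 := by linarith
  set T := ∑ i ∈ Icc 1 n, ((n : ℝ) - i + 1) * p i with hT
  set S := ∑ j ∈ Icc 1 n, W j * (f j : ℝ) ^ (1 / α) * ((n : ℝ) - j + 1) ^ ((α - 1) / α) with hS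
  -- positivity of weights
  have hw : ∀ i ∈ Icc 1 n, (0:ℝ) < (n : ℝ) - i + 1 := by
    intro i hi
    rw [mem_Icc] at hi
    have : (i : ℝ) ≤ n := by exact_mod_cast hi.2
    linarith
  have hT0 : 0 ≤ T := Finset.sum_nonneg fun i hi =>
    le_of_lt (mul_pos (hw i hi) (hp i hi))
  have hE' : 0 ≤ ∑ i ∈ Icc 1 n, (f i : ℝ) * W i ^ α * p i ^ (1 - α) :=
    Finset.sum_nonneg fun i hi => by
      have := hf i hi; have := hW i hi; have := hp i hi
      positivity
  -- conjugate exponents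
  have hpq : (α / (α - 1)).HolderConjugate α := (Real.HolderConjugate.conjExponent hα).symm
  -- Hölder
  have key : S ≤ T ^ ((α - 1) / α) *
      (∑ i ∈ Icc 1 n, (f i : ℝ) * W i ^ α * p i ^ (1 - α)) ^ (1 / α) := by
    have h := Real.inner_le_Lp_mul_Lq (Icc 1 n)
      (fun i => (((n : ℝ) - i + 1) * p i) ^ ((α - 1) / α))
      (fun i => ((f i : ℝ) * W i ^ α * p i ^ (1 - α)) ^ (1 / α)) hpq
    have h1 : ∀ i ∈ Icc 1 n,
        (((n : ℝ) - i + 1) * p i) ^ ((α - 1) / α) *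
          ((f i : ℝ) * W i ^ α * p i ^ (1 - α)) ^ (1 / α)
        = W i * (f i : ℝ) ^ (1 / α) * ((n : ℝ) - i + 1) ^ ((α - 1) / α) := by
      intro i hi
      have hwi := hw i hi
      have hpi := hp i hi
      have hWi := hW i hi
      have hfi : (0:ℝ) < (f i : ℝ) := by exact_mod_cast hf i hi
      rw [Real.mul_rpow hwi.le hpi.le,
        Real.mul_rpow (by positivity) (by positivity : (0:ℝ) ≤ p i ^ (1 - α)),
        Real.mul_rpow hfi.le (by positivity : (0:ℝ) ≤ W i ^ α),
        ← Real.rpow_mul hWi.le, ← Real.rpow_mul hpi.le,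
        mul_one_div α α, div_self hα0.ne', Real.rpow_one]
      have hpcomb : p i ^ ((α - 1) / α) * p i ^ ((1 - α) * (1 / α)) = 1 := by
        rw [← Real.rpow_add hpi, show (α - 1) / α + (1 - α) * (1 / α) = 0 by ring,
          Real.rpow_zero]
      calc ((n:ℝ) - i + 1) ^ ((α - 1) / α) * p i ^ ((α - 1) / α) *
            ((f i:ℝ) ^ (1 / α) * W i * p i ^ ((1 - α) * (1 / α)))
          = W i * (f i:ℝ) ^ (1 / α) * ((n:ℝ) - i + 1) ^ ((α - 1) / α) *
            (p i ^ ((α - 1) / α) * p i ^ ((1 - α) * (1 / α))) := by ring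
        _ = _ := by rw [hpcomb, mul_one]
    have h2 : ∀ i ∈ Icc 1 n,
        |(((n : ℝ) - i + 1) * p i) ^ ((α - 1) / α)| ^ (α / (α - 1)) = ((n : ℝ) - i + 1) * p i := by
      intro i hi
      have hwi := mul_pos (hw i hi) (hp i hi)
      rw [abs_of_nonneg (Real.rpow_nonneg hwi.le _), ← Real.rpow_mul hwi.le,
        div_mul_div_comm, mul_comm (α - 1) α, div_self (by positivity), Real.rpow_one]
    have h3 : ∀ i ∈ Icc 1 n,
        |((f i : ℝ) * W i ^ α * p i ^ (1 - α)) ^ (1 / α)| ^ α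
          = (f i : ℝ) * W i ^ α * p i ^ (1 - α) := by
      intro i hi
      have hfi : (0:ℝ) < (f i : ℝ) := by exact_mod_cast hf i hi
      have := hW i hi; have := hp i hi
      have hx : (0:ℝ) ≤ (f i : ℝ) * W i ^ α * p i ^ (1 - α) := by positivity
      rw [abs_of_nonneg (Real.rpow_nonneg hx _), ← Real.rpow_mul hx,
        one_div_mul_cancel hα0.ne', Real.rpow_one]
    rw [Finset.sum_congr rfl h1, Finset.sum_congr rfl h2, Finset.sum_congr rfl h3] at h
    calc S ≤ T ^ (1 / (α / (α - 1))) *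
        (∑ i ∈ Icc 1 n, (f i : ℝ) * W i ^ α * p i ^ (1 - α)) ^ (1 / α) := h
      _ = _ := by rw [one_div_div]
  -- bound the energy factor
  have key2 : S ≤ T ^ ((α - 1) / α) * E ^ (1 / α) := by
    refine key.trans (mul_le_mul_of_nonneg_left ?_ (Real.rpow_nonneg hT0 _))
    exact Real.rpow_le_rpow hE' henergy (by positivity)
  have hS0 : 0 ≤ S := Finset.sum_nonneg fun i hi => by
    have := hW i hi
    have hfi : (0:ℝ) < (f i : ℝ) := by exact_mod_cast hf i hi
    have := hw i hi
    positivity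
  -- raise to the power α/(α-1)
  have key3 : S ^ (α / (α - 1)) ≤ T * E ^ (1 / (α - 1)) := by
    have := Real.rpow_le_rpow hS0 key2 (le_of_lt (by positivity : (0:ℝ) < α / (α - 1)))
    calc S ^ (α / (α - 1)) ≤ (T ^ ((α - 1) / α) * E ^ (1 / α)) ^ (α / (α - 1)) := this
      _ = T * E ^ (1 / (α - 1)) := by
          rw [Real.mul_rpow (Real.rpow_nonneg hT0 _) (Real.rpow_nonneg hE.le _),
            ← Real.rpow_mul hT0, ← Real.rpow_mul hE.le,
            div_mul_div_comm, mul_comm (α - 1) α, div_self (by positivity), Real.rpow_one]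
          congr 1
          field_simp
  -- conclude
  have hEpos : (0:ℝ) < E ^ (1 / (α - 1)) := Real.rpow_pos_of_pos hE _
  have hEinv : E ^ (1 / (1 - α)) = (E ^ (1 / (α - 1)))⁻¹ := by
    rw [← Real.rpow_neg_one (E ^ (1 / (α - 1))), ← Real.rpow_mul hE.le]
    congr 1
    field_simp
    rw [div_eq_iff (by linarith : (1:ℝ) - α ≠ 0)]
    ring
  rw [ge_iff_le, hEinv, inv_mul_le_iff₀ hEpos]
  linarith [key3]
end
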